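/- arXiv:2312.00712 — 5 statements merged into one kernel-verified Lean document; each statement's English description precedes it below -/
import Mathlib

section
/- Fix an integer N ≥ 1. For every λ ∈ ℂ with Re λ > 0, the integral defining Z[λ, N] converges absolutely, and the function λ ↦ Z[λ, N] is analytic on the open right half-plane {λ ∈ ℂ : Re λ > 0}. -/
open MeasureTheory Complex Matrix

/-- The quartic matrix model partition function `Z[λ, N]`:
the integral over `N × N` complex matrices `M` (with Lebesgue measure
`∏ dRe(M i j) dIm(M i j)`, realized as the volume measure on `Fin N → Fin N → ℂ`)
of `exp(−Tr(M Mᴴ) − (λ/(2N)) Tr((M Mᴴ)²))`, normalized by `π^{−N²}`. -/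
noncomputable def quarticZ (N : ℕ) (lam : ℂ) : ℂ :=
  (Real.pi : ℂ) ^ (-(N ^ 2 : ℤ)) *
    ∫ M : Fin N → Fin N → ℂ,
      Complex.exp (-(Matrix.of M * (Matrix.of M)ᴴ).trace
        - lam / (2 * N) *
          ((Matrix.of M * (Matrix.of M)ᴴ) * (Matrix.of M * (Matrix.of M)ᴴ)).trace)

namespace QuarticAux

/-- `S N M = ∑ |M i j|²`. -/
noncomputable def S (N : ℕ) (M : Fin N → Fin N → ℂ) : ℝ := ∑ i, ∑ j, ‖M i j‖ ^ 2

/-- `T N M = ∑ |(M Mᴴ) i j|²`. -/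
noncomputable def T (N : ℕ) (M : Fin N → Fin N → ℂ) : ℝ :=
  ∑ i, ∑ j, ‖(Matrix.of M * (Matrix.of M)ᴴ) i j‖ ^ 2

lemma S_nonneg (N : ℕ) (M : Fin N → Fin N → ℂ) : 0 ≤ S N M := by
  refine Finset.sum_nonneg fun i _ => Finset.sum_nonneg fun j _ => by positivity

lemma T_nonneg (N : ℕ) (M : Fin N → Fin N → ℂ) : 0 ≤ T N M := by
  refine Finset.sum_nonneg fun i _ => Finset.sum_nonneg fun j _ => by positivity

lemma trace_mul_conjTranspose (N : ℕ) (A : Matrix (Fin N) (Fin N) ℂ) :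
    (A * Aᴴ).trace = ((∑ i, ∑ j, ‖A i j‖ ^ 2 : ℝ) : ℂ) := by
  simp only [Matrix.trace, Matrix.diag, Matrix.mul_apply, Matrix.conjTranspose_apply]
  push_cast
  refine Finset.sum_congr rfl fun i _ => Finset.sum_congr rfl fun j _ => ?_
  rw [show star (A i j) = (starRingEnd ℂ) (A i j) from rfl, Complex.mul_conj,
    Complex.normSq_eq_norm_sq]
  push_cast
  ring

lemma S_eq (N : ℕ) (M : Fin N → Fin N → ℂ) :
    (Matrix.of M * (Matrix.of M)ᴴ).trace = ((S N M : ℝ) : ℂ) := by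
  rw [trace_mul_conjTranspose, S]
  norm_num [Matrix.of_apply]

lemma T_eq (N : ℕ) (M : Fin N → Fin N → ℂ) :
    ((Matrix.of M * (Matrix.of M)ᴴ) * (Matrix.of M * (Matrix.of M)ᴴ)).trace
      = ((T N M : ℝ) : ℂ) := by
  have h : (Matrix.of M * (Matrix.of M)ᴴ)ᴴ = Matrix.of M * (Matrix.of M)ᴴ :=
    (Matrix.isHermitian_mul_conjTranspose_self (Matrix.of M))
  conv_lhs => rw [show ((Matrix.of M * (Matrix.of M)ᴴ) * (Matrix.of M * (Matrix.of M)ᴴ))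
    = (Matrix.of M * (Matrix.of M)ᴴ) * (Matrix.of M * (Matrix.of M)ᴴ)ᴴ by rw [h]]
  rw [trace_mul_conjTranspose, T]

lemma continuous_S (N : ℕ) : Continuous (S N) := by
  unfold S; fun_prop

lemma continuous_T (N : ℕ) : Continuous (T N) := by
  have h : T N = fun M : Fin N → Fin N → ℂ =>
      ∑ i, ∑ j, ‖∑ k, M i k * star (M j k)‖ ^ 2 := by
    funext M
    simp [T, Matrix.mul_apply, Matrix.conjTranspose_apply, Matrix.of_apply]
  rw [h]
  fun_prop

/-- the integrand, expressed in terms of `S` and `T`. -/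
noncomputable def F (N : ℕ) (lam : ℂ) (M : Fin N → Fin N → ℂ) : ℂ :=
  Complex.exp (-((S N M : ℝ) : ℂ) - lam / (2 * N) * ((T N M : ℝ) : ℂ))

lemma integrand_eq (N : ℕ) (lam : ℂ) (M : Fin N → Fin N → ℂ) :
    Complex.exp (-(Matrix.of M * (Matrix.of M)ᴴ).trace
        - lam / (2 * N) *
          ((Matrix.of M * (Matrix.of M)ᴴ) * (Matrix.of M * (Matrix.of M)ᴴ)).trace)
      = F N lam M := by
  rw [F, S_eq, T_eq]

lemma div_re (N : ℕ) (lam : ℂ) : (lam / (2 * (N : ℂ))).re = lam.re / (2 * N) := by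
  have : (2 * (N : ℂ)) = ((2 * N : ℝ) : ℂ) := by push_cast; ring
  rw [this, Complex.div_ofReal_re]

lemma norm_F (N : ℕ) (lam : ℂ) (M : Fin N → Fin N → ℂ) :
    ‖F N lam M‖ = Real.exp (-(S N M) - lam.re / (2 * N) * T N M) := by
  rw [F, Complex.norm_exp]
  congr 1
  simp [Complex.sub_re, Complex.neg_re, Complex.ofReal_re, Complex.mul_re,
    Complex.ofReal_im, div_re]

lemma key_exp_bound {a u : ℝ} (ha : 0 < a) (_hu : 0 ≤ u) :
    u * Real.exp (-(a * u)) ≤ 1 / a := by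
  have h1 : a * u ≤ Real.exp (a * u) :=
    le_trans (by linarith) (Real.add_one_le_exp (a * u))
  have hkey : a * (u * Real.exp (-(a * u))) ≤ 1 := by
    calc a * (u * Real.exp (-(a * u))) = a * u * Real.exp (-(a * u)) := by ring
      _ ≤ Real.exp (a * u) * Real.exp (-(a * u)) := by gcongr
      _ = 1 := by rw [← Real.exp_add]; simp
  rw [le_div_iff₀ ha]
  calc u * Real.exp (-(a * u)) * a = a * (u * Real.exp (-(a * u))) := by ring
    _ ≤ 1 := hkey

lemma integrable_gauss_complex :
    Integrable (fun z : ℂ => Real.exp (-‖z‖ ^ 2)) := by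
  have hbase : Integrable (fun p : ℝ × ℝ => Real.exp (-p.1 ^ 2) * Real.exp (-p.2 ^ 2)) :=
    Integrable.mul_prod (by simpa using integrable_exp_neg_mul_sq (one_pos))
      (by simpa using integrable_exp_neg_mul_sq (one_pos))
  have h := (Complex.volume_preserving_equiv_real_prod.integrable_comp_emb
    Complex.measurableEquivRealProd.measurableEmbedding).2 hbase
  have heq : (fun p : ℝ × ℝ => Real.exp (-p.1 ^ 2) * Real.exp (-p.2 ^ 2)) ∘
      Complex.measurableEquivRealProd = fun z : ℂ => Real.exp (-‖z‖ ^ 2) := by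
    funext z
    simp only [Function.comp_apply, Complex.measurableEquivRealProd_apply]
    rw [← Real.exp_add]
    congr 1
    have : ‖z‖ ^ 2 = z.re ^ 2 + z.im ^ 2 := by
      rw [Complex.sq_norm, Complex.normSq_apply]; ring
    rw [this]; ring
  rwa [heq] at h

lemma integrable_gauss (N : ℕ) :
    Integrable (fun M : Fin N → Fin N → ℂ => Real.exp (-S N M)) := by
  have h1 : ∀ M : Fin N → Fin N → ℂ, Real.exp (-S N M)
      = ∏ i, (fun v : Fin N → ℂ => Real.exp (-∑ j, ‖v j‖ ^ 2)) (M i) := by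
    intro M
    rw [S, ← Real.exp_sum]
    congr 1
    rw [← Finset.sum_neg_distrib]
  simp only [h1]
  refine Integrable.fintype_prod (f := fun _ (v : Fin N → ℂ) =>
    Real.exp (-∑ j, ‖v j‖ ^ 2)) fun i => ?_
  have h2 : ∀ v : Fin N → ℂ, Real.exp (-∑ j, ‖v j‖ ^ 2)
      = ∏ j, (fun z : ℂ => Real.exp (-‖z‖ ^ 2)) (v j) := by
    intro v
    rw [← Real.exp_sum]
    congr 1
    rw [← Finset.sum_neg_distrib]
  simp only [h2]
  exact Integrable.fintype_prod (f := fun _ (z : ℂ) => Real.exp (-‖z‖ ^ 2))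
    fun j => integrable_gauss_complex

lemma continuous_F (N : ℕ) (lam : ℂ) : Continuous (F N lam) := by
  unfold F
  exact ((Complex.continuous_ofReal.comp (continuous_S N)).neg.sub
    (continuous_const.mul (Complex.continuous_ofReal.comp (continuous_T N)))).cexp

lemma integrable_F (N : ℕ) (hN : 1 ≤ N) {lam : ℂ} (hlam : 0 ≤ lam.re) :
    Integrable (F N lam) := by
  have hNpos : (0:ℝ) < 2 * N := by positivity
  refine (integrable_gauss N).mono ((continuous_F N lam).aestronglyMeasurable)
    (Filter.Eventually.of_forall fun M => ?_)
  rw [norm_F]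
  rw [Real.norm_eq_abs, abs_of_pos (Real.exp_pos _)]
  apply Real.exp_le_exp.2
  have : 0 ≤ lam.re / (2 * N) * T N M := by
    apply mul_nonneg (div_nonneg hlam (le_of_lt hNpos)) (T_nonneg N M)
  linarith

end QuarticAux

open QuarticAux

/-- For every `λ` with `Re λ > 0` the integral defining `Z[λ, N]` converges absolutely, and
`λ ↦ Z[λ, N]` is analytic on the open right half-plane. -/
theorem quarticZ_integrable_and_analyticOn_rightHalfPlane (N : ℕ) (hN : 1 ≤ N) :
    (∀ lam : ℂ, 0 < lam.re →
      Integrable (fun M : Fin N → Fin N → ℂ =>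
        Complex.exp (-(Matrix.of M * (Matrix.of M)ᴴ).trace
          - lam / (2 * N) *
            ((Matrix.of M * (Matrix.of M)ᴴ) * (Matrix.of M * (Matrix.of M)ᴴ)).trace))) ∧
    AnalyticOnNhd ℂ (quarticZ N) {lam : ℂ | 0 < lam.re} := by
  have hNpos : (0:ℝ) < 2 * N := by positivity
  have hint : ∀ lam : ℂ, 0 < lam.re →
      Integrable (fun M : Fin N → Fin N → ℂ =>
        Complex.exp (-(Matrix.of M * (Matrix.of M)ᴴ).trace
          - lam / (2 * N) *
            ((Matrix.of M * (Matrix.of M)ᴴ) * (Matrix.of M * (Matrix.of M)ᴴ)).trace)) := by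
    intro lam hlam
    simp only [integrand_eq]
    exact integrable_F N hN (le_of_lt hlam)
  refine ⟨hint, ?_⟩
  have hZ : quarticZ N = fun lam =>
      (Real.pi : ℂ) ^ (-(N ^ 2 : ℤ)) * ∫ M : Fin N → Fin N → ℂ, F N lam M := by
    funext lam
    rw [quarticZ]
    congr 1
    exact integral_congr_ae (Filter.Eventually.of_forall fun M => integrand_eq N lam M)
  refine DifferentiableOn.analyticOnNhd ?_ (isOpen_lt continuous_const Complex.continuous_re)
  intro lam0 hlam0
  simp only [Set.mem_setOf_eq] at hlam0
  -- derivative candidate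
  set F' : ℂ → (Fin N → Fin N → ℂ) → ℂ :=
    fun lam M => -((T N M / (2 * N) : ℝ) : ℂ) * F N lam M with hF'
  have hball : ∀ lam ∈ Metric.ball lam0 (lam0.re / 2), lam0.re / 2 ≤ lam.re := by
    intro lam hlam
    have h1 : |(lam - lam0).re| ≤ ‖lam - lam0‖ := Complex.abs_re_le_norm _
    rw [Metric.mem_ball, Complex.dist_eq] at hlam
    have h2 : |(lam - lam0).re| < lam0.re / 2 := lt_of_le_of_lt h1 hlam
    rw [Complex.sub_re, abs_lt] at h2
    linarith [h2.1]
  have main := hasDerivAt_integral_of_dominated_loc_of_deriv_le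
    (F := F N) (F' := F') (x₀ := lam0)
    (bound := fun M => 2 / lam0.re * Real.exp (-S N M))
    (Metric.ball_mem_nhds lam0 (half_pos hlam0))
    (Filter.Eventually.of_forall fun lam => (continuous_F N lam).aestronglyMeasurable)
    (integrable_F N hN (le_of_lt hlam0))
    (Continuous.aestronglyMeasurable (by
      exact ((Complex.continuous_ofReal.comp ((continuous_T N).div_const _)).neg.mul
        (continuous_F N lam0))))
    (Filter.Eventually.of_forall fun M => ?_)
    (((integrable_gauss N).const_mul _))
    (Filter.Eventually.of_forall fun M => ?_)
  · rw [hZ]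
    exact (main.2.differentiableAt.const_mul _).differentiableWithinAt
  · -- bound on the derivative
    intro lam hlam
    have hc := hball lam hlam
    have hre : 0 < lam.re := lt_of_lt_of_le (half_pos hlam0) hc
    rw [hF']
    rw [norm_mul, norm_neg, Complex.norm_real, Real.norm_eq_abs,
      _root_.abs_of_nonneg (div_nonneg (T_nonneg N M) (le_of_lt hNpos)), norm_F]
    have key : T N M / (2 * N) * Real.exp (-(lam.re / (2 * N) * T N M)) ≤ 1 / lam.re := by
      have h := key_exp_bound (a := lam.re / (2 * N)) (u := T N M)
        (div_pos hre hNpos) (T_nonneg N M)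
      calc T N M / (2 * N) * Real.exp (-(lam.re / (2 * N) * T N M))
          = (T N M * Real.exp (-(lam.re / (2 * N) * T N M))) / (2 * N) := by ring
        _ ≤ (1 / (lam.re / (2 * N))) / (2 * N) := by gcongr
        _ = 1 / lam.re := by field_simp
    have h1 : Real.exp (-S N M - lam.re / (2 * N) * T N M)
        = Real.exp (-S N M) * Real.exp (-(lam.re / (2 * N) * T N M)) := by
      rw [← Real.exp_add]; ring_nf
    rw [h1]
    calc T N M / (2 * N) * (Real.exp (-S N M) * Real.exp (-(lam.re / (2 * N) * T N M)))
        = (T N M / (2 * N) * Real.exp (-(lam.re / (2 * N) * T N M))) * Real.exp (-S N M) := by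
          ring
      _ ≤ (1 / lam.re) * Real.exp (-S N M) :=
          mul_le_mul_of_nonneg_right key (Real.exp_pos _).le
      _ ≤ 2 / lam0.re * Real.exp (-S N M) := by
          refine mul_le_mul_of_nonneg_right ?_ (Real.exp_pos _).le
          rw [div_le_div_iff₀ hre hlam0]
          linarith
  · -- differentiability in lam
    intro lam _
    have h1 : HasDerivAt (fun lam : ℂ => -((S N M : ℝ) : ℂ) - lam / (2 * N) * ((T N M : ℝ) : ℂ))
        (-((T N M / (2 * N) : ℝ) : ℂ)) lam := by
      have h2 : HasDerivAt (fun lam : ℂ => lam / (2 * (N:ℂ)) * ((T N M : ℝ) : ℂ))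
          (1 / (2 * (N:ℂ)) * ((T N M : ℝ) : ℂ)) lam :=
        ((hasDerivAt_id lam).div_const (2 * (N:ℂ))).mul_const _
      have h3 := h2.const_sub (-((S N M : ℝ) : ℂ))
      refine h3.congr_deriv ?_
      push_cast
      ring
    have h4 := h1.cexp
    rw [hF']
    refine h4.congr_deriv ?_
    simp only [F]
    ring
end

section
/- Let n ≥ 1 be an integer and let B be an n×n complex matrix whose Hermitian part (B + Bᴴ)/2 is positive definite. Then the function z ↦ exp(−⟨z, B z⟩), where ⟨z, B z⟩ = Σ_{a,b} conj(z_a) B_{ab} z_b, is absolutely integrable over ℂⁿ with respect to Lebesgue measure ∏_a dRe(z_a) dIm(z_a), det B ≠ 0, and π^{−n} ∫_{ℂⁿ} exp(−⟨z, B z⟩) dz = (det B)^{−1}. -/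
open Matrix Complex MeasureTheory ComplexOrder

namespace ComplexGaussianAux

variable {n : ℕ}


variable {n : ℕ}

lemma det_fromBlocks_conj (A B : Matrix (Fin n) (Fin n) ℂ) :
    (fromBlocks A (-B) B A).det = (A + Complex.I • B).det * (A - Complex.I • B).det := by
  have key : fromBlocks (1 : Matrix (Fin n) (Fin n) ℂ) (Complex.I • 1) 0 1
        * fromBlocks A (-B) B A * fromBlocks 1 (-(Complex.I • 1)) 0 1
      = fromBlocks (A + Complex.I • B) 0 B (A - Complex.I • B) := by
    rw [fromBlocks_multiply, fromBlocks_multiply]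
    rw [fromBlocks_inj]
    refine ⟨?_, ?_, ?_, ?_⟩ <;>

      simp only [Matrix.mul_one, Matrix.one_mul, Matrix.mul_neg, Matrix.neg_mul,
        Matrix.smul_mul, Matrix.mul_smul, Matrix.zero_mul, Matrix.mul_zero, add_zero, zero_add,
        smul_smul, smul_add, Complex.I_mul_I, neg_smul, one_smul, neg_neg, sub_eq_add_neg]
    all_goals module
  have h2 := congrArg Matrix.det key
  rw [det_mul, det_mul, det_fromBlocks_zero₂₁, det_fromBlocks_zero₂₁, det_one,
    det_fromBlocks_zero₁₂] at h2
  simpa using h2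


/-- The real-linear equivalence between `ℂⁿ` and `ℝ^{n+n}`. -/
noncomputable def realify (n : ℕ) : (Fin n → ℂ) ≃ₗ[ℝ] ((Fin n ⊕ Fin n) → ℝ) where
  toFun z := Sum.elim (fun a => (z a).re) (fun a => (z a).im)
  map_add' z w := by funext i; cases i <;> simp
  map_smul' r z := by funext i; cases i <;> simp [Complex.real_smul]
  invFun v a := (v (Sum.inl a) : ℂ) + (v (Sum.inr a) : ℂ) * Complex.I
  left_inv z := by funext a; simp [Complex.ext_iff]
  right_inv v := by funext i; cases i <;> simp

lemma det_realify (M : Matrix (Fin n) (Fin n) ℂ) :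
    LinearMap.det (LinearMap.restrictScalars ℝ M.mulVecLin) = Complex.normSq M.det := by
  classical
  let b : Module.Basis (Fin n ⊕ Fin n) ℝ (Fin n → ℂ) := Module.Basis.ofEquivFun (realify n)
  rw [← LinearMap.det_toMatrix b]
  have hmat : LinearMap.toMatrix b b (LinearMap.restrictScalars ℝ M.mulVecLin)
      = fromBlocks (M.map Complex.re) (-(M.map Complex.im))
          (M.map Complex.im) (M.map Complex.re) := by
    ext i j
    rw [LinearMap.toMatrix_apply]
    cases i <;> cases j <;>
      simp [b, realify, Matrix.mulVec, dotProduct, Function.update_apply,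
        Finset.sum_ite_eq, Complex.ext_iff, mul_comm, Pi.single_apply, Sum.inl.injEq, Sum.inr.injEq]
  rw [hmat]
  set X := fromBlocks (M.map Complex.re) (-(M.map Complex.im))
      (M.map Complex.im) (M.map Complex.re) with hX
  have hc : ((X.det : ℝ) : ℂ) = ↑(Complex.normSq M.det) := by
    have h1 : ((X.det : ℝ) : ℂ) = (X.map (algebraMap ℝ ℂ)).det := by
      rw [← RingHom.mapMatrix_apply, ← RingHom.map_det, Complex.coe_algebraMap]
    have hA : (M.map Complex.re).map (algebraMap ℝ ℂ)
        + Complex.I • (M.map Complex.im).map (algebraMap ℝ ℂ) = M := by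
      ext i j
      simp [Complex.ext_iff]
    have hB : (M.map Complex.re).map (algebraMap ℝ ℂ)
        - Complex.I • (M.map Complex.im).map (algebraMap ℝ ℂ)
        = M.map (starRingEnd ℂ) := by
      ext i j
      simp [Complex.ext_iff]
    rw [h1, hX, Matrix.fromBlocks_map]
    rw [show ((-(M.map Complex.im)).map (algebraMap ℝ ℂ))
        = -((M.map Complex.im).map (algebraMap ℝ ℂ)) by ext i j; simp]
    rw [det_fromBlocks_conj, hA, hB, ← RingHom.mapMatrix_apply, ← RingHom.map_det,
      Complex.mul_conj]
  exact_mod_cast hc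




lemma integrable_cexp_neg_mul_normSq {c : ℂ} (hc : 0 < c.re) :
    Integrable fun z : ℂ => Complex.exp (-(c * Complex.normSq z)) := by
  rw [← MeasurePreserving.integrable_comp_emb
    Complex.volume_preserving_equiv_real_prod.symm
    (Complex.measurableEquivRealProd.symm.measurableEmbedding)]
  have : ((fun z : ℂ => Complex.exp (-(c * Complex.normSq z)))
        ∘ ⇑Complex.measurableEquivRealProd.symm)
      = fun p : ℝ × ℝ => Complex.exp (-c * p.1 ^ 2) * Complex.exp (-c * p.2 ^ 2) := by
    funext p
    simp only [Function.comp_apply, Complex.measurableEquivRealProd_symm_apply,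
      Complex.normSq_mk, ← Complex.exp_add]
    congr 1
    push_cast
    ring
  rw [this]
  exact (integrable_cexp_neg_mul_sq hc).mul_prod (integrable_cexp_neg_mul_sq hc)

lemma integral_cexp_neg_mul_normSq {c : ℂ} (hc : 0 < c.re) :
    ∫ z : ℂ, Complex.exp (-(c * Complex.normSq z)) = ↑Real.pi / c := by
  rw [← MeasurePreserving.integral_comp Complex.volume_preserving_equiv_real_prod.symm
    (Complex.measurableEquivRealProd.symm.measurableEmbedding)
    (fun z : ℂ => Complex.exp (-(c * Complex.normSq z)))]
  have : (fun p : ℝ × ℝ => Complex.exp (-(c * Complex.normSq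
        (Complex.measurableEquivRealProd.symm p))))
      = fun p : ℝ × ℝ => Complex.exp (-c * p.1 ^ 2) * Complex.exp (-c * p.2 ^ 2) := by
    funext p
    simp only [Complex.measurableEquivRealProd_symm_apply,
      Complex.normSq_mk, ← Complex.exp_add]
    congr 1
    push_cast
    ring
  rw [show ∫ (x : ℝ × ℝ), Complex.exp (-(c * ↑(Complex.normSq
        (Complex.measurableEquivRealProd.symm x))))
      = ∫ p : ℝ × ℝ, Complex.exp (-c * p.1 ^ 2) * Complex.exp (-c * p.2 ^ 2) from by rw [this]]
  rw [Measure.volume_eq_prod ℝ ℝ,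
    MeasureTheory.integral_prod_mul (fun x : ℝ => Complex.exp (-c * x ^ 2))
      (fun y : ℝ => Complex.exp (-c * y ^ 2)), integral_gaussian_complex hc]
  rw [← Complex.cpow_add _ _ (div_ne_zero (Complex.ofReal_ne_zero.mpr Real.pi_ne_zero) 
    (fun h => by simp [h] at hc))]
  norm_num





lemma prod_form (d : Fin n → ℂ) (w : Fin n → ℂ) :
    Complex.exp (-(∑ a, d a * Complex.normSq (w a)))
      = ∏ a, Complex.exp (-(d a * Complex.normSq (w a))) := by
  rw [← Complex.exp_sum, ← Finset.sum_neg_distrib]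

lemma integrable_diag {d : Fin n → ℂ} (hd : ∀ a, 0 < (d a).re) :
    Integrable (fun w : Fin n → ℂ => Complex.exp (-(∑ a, d a * Complex.normSq (w a)))) := by
  simp only [prod_form]
  exact Integrable.fintype_prod (fun a => integrable_cexp_neg_mul_normSq (hd a))

lemma integral_diag {d : Fin n → ℂ} (hd : ∀ a, 0 < (d a).re) :
    ∫ w : Fin n → ℂ, Complex.exp (-(∑ a, d a * Complex.normSq (w a)))
      = ∏ a, (↑Real.pi / d a) := by
  simp only [prod_form]
  rw [MeasureTheory.integral_fintype_prod_volume_eq_prod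
    (fun a (z : ℂ) => Complex.exp (-(d a * Complex.normSq z)))]
  exact Finset.prod_congr rfl fun a _ => integral_cexp_neg_mul_normSq (hd a)

lemma map_mulVec_volume (M : Matrix (Fin n) (Fin n) ℂ) (hM : M.det ≠ 0)
    (hdr : LinearMap.det (LinearMap.restrictScalars ℝ M.mulVecLin) = Complex.normSq M.det) :
    Measure.map (M.mulVec) (volume : Measure (Fin n → ℂ))
      = ENNReal.ofReal (Complex.normSq M.det)⁻¹ • volume := by
  have hd0 : LinearMap.det (LinearMap.restrictScalars ℝ M.mulVecLin) ≠ 0 := by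
    rw [hdr]; simpa using hM
  have h := Measure.map_linearMap_addHaar_eq_smul_addHaar (volume : Measure (Fin n → ℂ)) hd0
  rw [hdr] at h
  have hcoe : ⇑(LinearMap.restrictScalars ℝ M.mulVecLin) = M.mulVec := rfl
  rw [hcoe] at h
  rw [h, abs_inv, _root_.abs_of_nonneg (Complex.normSq_nonneg _)]




lemma exists_diag (B : Matrix (Fin n) (Fin n) ℂ)
    (hB : ((1 / 2 : ℂ) • (B + Bᴴ)).PosDef) :
    ∃ (T : Matrix (Fin n) (Fin n) ℂ) (d : Fin n → ℂ),
      (∀ j, (d j).re = 1) ∧ Tᴴ * B * T = diagonal d := by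
  classical
  set H := ((1 / 2 : ℂ) • (B + Bᴴ)) with hHdef
  have hH : H.IsHermitian := hB.1
  set V : Matrix (Fin n) (Fin n) ℂ := (hH.eigenvectorUnitary : Matrix (Fin n) (Fin n) ℂ)
    with hVdef
  have hVV : Vᴴ * V = 1 := by
    rw [← Matrix.star_eq_conjTranspose]
    exact Matrix.mem_unitaryGroup_iff'.mp (hH.eigenvectorUnitary).2
  set e := hH.eigenvalues with hedef
  have he : ∀ i, 0 < e i := fun i => hB.eigenvalues_pos i
  set s : Fin n → ℂ := fun i => (((Real.sqrt (e i))⁻¹ : ℝ) : ℂ) with hsdef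
  set T₁ : Matrix (Fin n) (Fin n) ℂ := V * diagonal s with hT₁
  have hsstar : star s = s := funext fun i => by simp [hsdef, ← Complex.ofReal_inv]
  have hT₁H : T₁ᴴ = diagonal s * Vᴴ := by
    rw [hT₁, conjTranspose_mul, diagonal_conjTranspose, hsstar]
  have key : T₁ᴴ * H * T₁ = 1 := by
    have expand : T₁ᴴ * H * T₁
        = diagonal s * ((Vᴴ * V) * (diagonal ((RCLike.ofReal ∘ e) : Fin n → ℂ)
            * ((Vᴴ * V) * diagonal s))) := by
      conv_lhs => rw [hH.spectral_theorem, Unitary.conjStarAlgAut_apply]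
      rw [hT₁H, hT₁]
      simp only [Matrix.star_eq_conjTranspose, mul_assoc]
      rfl
    rw [expand, hVV, one_mul, one_mul, diagonal_mul_diagonal, diagonal_mul_diagonal,
      ← diagonal_one]
    refine congrArg Matrix.diagonal (funext fun i => ?_)
    have h1 : Real.sqrt (e i) ≠ 0 := ne_of_gt (Real.sqrt_pos.mpr (he i))
    have h2c : ((Real.sqrt (e i) : ℂ)) * ((Real.sqrt (e i) : ℂ)) = ((e i : ℝ) : ℂ) := by
      exact_mod_cast Real.mul_self_sqrt (he i).le
    have h1c : ((Real.sqrt (e i) : ℂ)) ≠ 0 := Complex.ofReal_ne_zero.mpr h1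
    show s i * (((e i : ℝ) : ℂ) * s i) = 1
    simp only [hsdef]
    push_cast
    rw [← h2c]
    field_simp
  -- the matrix C has hermitian part 1
  set C : Matrix (Fin n) (Fin n) ℂ := T₁ᴴ * B * T₁ with hCdef
  have hCH : Cᴴ = (2 : ℂ) • 1 - C := by
    have h2H : B + Bᴴ = (2 : ℂ) • H := by
      rw [hHdef, smul_smul]
      norm_num
    have hCconj : Cᴴ = T₁ᴴ * Bᴴ * T₁ := by
      rw [hCdef]
      simp [conjTranspose_mul, mul_assoc]
    have hsum : C + Cᴴ = (2 : ℂ) • 1 := by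
      rw [hCdef, hCconj, ← key]
      rw [← Matrix.add_mul, ← Matrix.mul_add, h2H]
      simp only [Matrix.mul_smul, Matrix.smul_mul]
    linear_combination (norm := module) hsum
  set K : Matrix (Fin n) (Fin n) ℂ := (-Complex.I) • (C - 1) with hKdef
  have hK : K.IsHermitian := by
    unfold Matrix.IsHermitian
    rw [hKdef, conjTranspose_smul, conjTranspose_sub, conjTranspose_one, hCH]
    rw [show star (-Complex.I) = Complex.I by simp]
    rw [two_smul]
    module
  have hCK : C = 1 + Complex.I • K := by
    rw [hKdef, smul_smul]
    simp [Complex.I_mul_I]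
  set U : Matrix (Fin n) (Fin n) ℂ := (hK.eigenvectorUnitary : Matrix (Fin n) (Fin n) ℂ)
    with hUdef
  have hUU : Uᴴ * U = 1 := by
    rw [← Matrix.star_eq_conjTranspose]
    exact Matrix.mem_unitaryGroup_iff'.mp (hK.eigenvectorUnitary).2
  have hUU' : U * Uᴴ = 1 := by
    rw [← Matrix.star_eq_conjTranspose]
    exact Matrix.mem_unitaryGroup_iff.mp (hK.eigenvectorUnitary).2
  set μ := hK.eigenvalues with hμdef
  refine ⟨T₁ * U, fun j => 1 + Complex.I * μ j, fun j => by simp, ?_⟩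
  have hDsum : (1 : Matrix (Fin n) (Fin n) ℂ)
      + Complex.I • diagonal ((RCLike.ofReal ∘ μ) : Fin n → ℂ)
      = diagonal (fun j => 1 + Complex.I * μ j) := by
    ext i j
    rcases eq_or_ne i j with h | h
    · subst h
      simp [Matrix.diagonal_apply_eq, Matrix.one_apply_eq]
    · simp [Matrix.diagonal_apply_ne _ h, Matrix.one_apply_ne h]
  have hCU : C = U * diagonal (fun j => 1 + Complex.I * μ j) * Uᴴ := by
    rw [hCK]
    conv_lhs => rw [hK.spectral_theorem, Unitary.conjStarAlgAut_apply]
    rw [← hDsum]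
    rw [Matrix.mul_add, Matrix.add_mul, Matrix.mul_one, hUU']
    simp only [Matrix.star_eq_conjTranspose, Matrix.mul_smul, Matrix.smul_mul, mul_assoc]
    rfl
  calc (T₁ * U)ᴴ * B * (T₁ * U)
      = Uᴴ * (C * U) := by
        rw [hCdef, conjTranspose_mul]
        simp only [mul_assoc]
    _ = Uᴴ * (U * (diagonal (fun j => 1 + Complex.I * (μ j : ℂ)) * (Uᴴ * U))) := by
        rw [hCU]
        simp only [mul_assoc]
    _ = diagonal (fun j => 1 + Complex.I * (μ j : ℂ)) := by
        rw [hUU, Matrix.mul_one, ← mul_assoc, hUU, Matrix.one_mul]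


end ComplexGaussianAux

open ComplexGaussianAux

/-- Complex Gaussian integral: if the Hermitian part `(B + Bᴴ)/2` of an `n × n` complex
matrix `B` is positive definite, then `z ↦ exp(−⟨z, Bz⟩)` (with
`⟨z, Bz⟩ = Σ_{a,b} conj(z_a) B_{ab} z_b`) is absolutely integrable over `ℂⁿ` with respect
to Lebesgue measure, `det B ≠ 0`, and `π^{−n} ∫ exp(−⟨z, Bz⟩) dz = (det B)⁻¹`. -/
theorem complex_gaussian_integral (n : ℕ) (hn : 1 ≤ n) (B : Matrix (Fin n) (Fin n) ℂ)
    (hB : ((1 / 2 : ℂ) • (B + Bᴴ)).PosDef) :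
    Integrable (fun z : Fin n → ℂ =>
      Complex.exp (-(∑ a, ∑ b, (starRingEnd ℂ) (z a) * B a b * z b))) ∧
    B.det ≠ 0 ∧
    (Real.pi : ℂ) ^ (-(n : ℤ)) *
        ∫ z : Fin n → ℂ,
          Complex.exp (-(∑ a, ∑ b, (starRingEnd ℂ) (z a) * B a b * z b))
      = (B.det)⁻¹ := by
  classical
  obtain ⟨T, d, hdre, hdiag⟩ := exists_diag B hB
  have hd0 : ∀ j, d j ≠ 0 := by
    intro j h
    have := hdre j
    rw [h] at this
    norm_num at this
  have hP : (∏ j, d j) ≠ 0 := Finset.prod_ne_zero_iff.mpr fun j _ => hd0 j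
  have hdetid : star T.det * B.det * T.det = ∏ j, d j := by
    have h := congrArg Matrix.det hdiag
    rwa [det_mul, det_mul, det_conjTranspose, det_diagonal] at h
  have hT : T.det ≠ 0 := by
    intro h
    rw [h, mul_zero] at hdetid
    exact hP hdetid.symm
  have hBdet : B.det ≠ 0 := by
    intro h
    rw [h, mul_zero, zero_mul] at hdetid
    exact hP hdetid.symm
  -- rewrite the quadratic form
  have hquad : ∀ z : Fin n → ℂ, (∑ a, ∑ b, (starRingEnd ℂ) (z a) * B a b * z b)
      = star z ⬝ᵥ B.mulVec z := by
    intro z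
    simp [dotProduct, Matrix.mulVec, Finset.mul_sum, mul_assoc]
  have hcomp : ∀ w : Fin n → ℂ, (star (T.mulVec w) ⬝ᵥ B.mulVec (T.mulVec w))
      = ∑ a, d a * Complex.normSq (w a) := by
    intro w
    rw [Matrix.star_mulVec, Matrix.mulVec_mulVec, ← Matrix.dotProduct_mulVec,
      Matrix.mulVec_mulVec, ← Matrix.mul_assoc, hdiag]
    refine Finset.sum_congr rfl fun a _ => ?_
    rw [Matrix.mulVec_diagonal]
    have : (starRingEnd ℂ) (w a) * (d a * w a) = d a * (w a * (starRingEnd ℂ) (w a)) := by ring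
    rw [Pi.star_apply, RCLike.star_def, this, Complex.mul_conj]
  -- the change-of-variables machinery
  haveI : Invertible T := T.invertibleOfIsUnitDet (isUnit_iff_ne_zero.mpr hT)
  let ψ : (Fin n → ℂ) ≃ₗ[ℂ] (Fin n → ℂ) := T.toLinearEquiv' ‹Invertible T›
  let E : (Fin n → ℂ) ≃ᵐ (Fin n → ℂ) :=
    ψ.toContinuousLinearEquiv.toHomeomorph.toMeasurableEquiv
  have hEc : ⇑E = T.mulVec := by
    funext w
    show Matrix.toLin' T w = T.mulVec w
    rw [Matrix.toLin'_apply]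
  have hmap := map_mulVec_volume T hT (det_realify T)
  have hdpos : ∀ a, 0 < (d a).re := fun a => by rw [hdre a]; norm_num
  have hgint : Integrable (fun w : Fin n → ℂ =>
      Complex.exp (-(∑ a, d a * Complex.normSq (w a)))) := integrable_diag hdpos
  have hsmul0 : (ENNReal.ofReal (Complex.normSq T.det)⁻¹) ≠ 0 := by
    simp only [ne_eq, ENNReal.ofReal_eq_zero, not_le, inv_pos]
    exact Complex.normSq_pos.mpr hT
  have hsmulTop : (ENNReal.ofReal (Complex.normSq T.det)⁻¹) ≠ ⊤ := ENNReal.ofReal_ne_top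
  have hfcomp : ((fun z : Fin n → ℂ => Complex.exp (-(star z ⬝ᵥ B.mulVec z))) ∘ ⇑E)
      = fun w : Fin n → ℂ => Complex.exp (-(∑ a, d a * Complex.normSq (w a))) := by
    funext w
    simp only [Function.comp_apply, hEc]
    rw [hcomp w]
  have hint : Integrable (fun z : Fin n → ℂ => Complex.exp (-(star z ⬝ᵥ B.mulVec z))) := by
    have h2 : Integrable (fun z : Fin n → ℂ => Complex.exp (-(star z ⬝ᵥ B.mulVec z)))
        (Measure.map (⇑E) volume) := by
      rw [MeasureTheory.integrable_map_equiv, hfcomp]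
      exact hgint
    rw [hEc, hmap] at h2
    exact (integrable_smul_measure hsmul0 hsmulTop).mp h2
  have hval : ∫ z : Fin n → ℂ, Complex.exp (-(star z ⬝ᵥ B.mulVec z))
      = (Complex.normSq T.det : ℂ) * ∏ a, ((Real.pi : ℂ) / d a) := by
    have h3 : ∫ z, Complex.exp (-(star z ⬝ᵥ B.mulVec z)) ∂(Measure.map (⇑E) volume)
        = ∫ w : Fin n → ℂ, Complex.exp (-(∑ a, d a * Complex.normSq (w a))) := by
      rw [MeasureTheory.integral_map_equiv]
      refine integral_congr_ae (Filter.Eventually.of_forall fun w => ?_)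
      exact congrFun hfcomp w
    rw [hEc, hmap, integral_smul_measure, integral_diag hdpos] at h3
    rw [ENNReal.toReal_ofReal (inv_nonneg.mpr (Complex.normSq_nonneg _))] at h3
    -- h3 : (normSq T.det)⁻¹ • ∫ f = ∏ (π/d)
    have h4 := congrArg (fun z => (Complex.normSq T.det : ℂ) * z) h3.symm
    rw [Complex.real_smul, ← mul_assoc] at h4
    have hns : Complex.normSq T.det ≠ 0 := ne_of_gt (Complex.normSq_pos.mpr hT)
    rw [show ((Complex.normSq T.det : ℂ)) * (((Complex.normSq T.det)⁻¹ : ℝ) : ℂ) = 1 by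
      exact_mod_cast mul_inv_cancel₀ hns, one_mul] at h4
    exact h4.symm
  refine ⟨by simpa only [hquad] using hint, hBdet, ?_⟩
  have hrw : (fun z : Fin n → ℂ =>
        Complex.exp (-(∑ a, ∑ b, (starRingEnd ℂ) (z a) * B a b * z b)))
      = fun z : Fin n → ℂ => Complex.exp (-(star z ⬝ᵥ B.mulVec z)) := by
    funext z
    rw [hquad z]
  rw [show (∫ z : Fin n → ℂ,
        Complex.exp (-(∑ a, ∑ b, (starRingEnd ℂ) (z a) * B a b * z b)))
      = ∫ z : Fin n → ℂ, Complex.exp (-(star z ⬝ᵥ B.mulVec z)) by rw [hrw]]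
  rw [hval]
  have hprod : (∏ a, ((Real.pi : ℂ) / d a)) = (Real.pi : ℂ) ^ n / ∏ j, d j := by
    rw [Finset.prod_div_distrib, Finset.prod_const, Finset.card_univ, Fintype.card_fin]
  rw [hprod]
  have hπ : ((Real.pi : ℂ)) ≠ 0 := Complex.ofReal_ne_zero.mpr Real.pi_ne_zero
  have hnorm : ((Complex.normSq T.det : ℝ) : ℂ) = star T.det * T.det := by
    rw [RCLike.star_def, mul_comm]
    exact (Complex.mul_conj _).symm
  rw [_root_.zpow_neg, zpow_natCast, hnorm, ← hdetid]
  have hst : (starRingEnd ℂ) T.det ≠ 0 := by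
    simpa [RCLike.star_def] using (star_ne_zero.mpr hT : star T.det ≠ 0)
  rw [RCLike.star_def] at hnorm hdetid ⊢
  field_simp
end

section
/- Let μ ∈ ℂ with μ ≠ 0, let ψ ∈ (−π/2, π/2), let x > 0 be real, and set a = x·μ·e^{iψ}. Define x₁ = (cos ψ + √(cos²ψ + 8|μ|²·cos ψ))/(2|μ|·cos ψ). If x ≥ max{x₁, 1/|μ|}, then |μ/a|·(1/cos ψ) + |(1−a)/μ| ≤ (3/2)·|(1−a)/μ|; equivalently, 1/(x·cos ψ) + |1 − a|/|μ| ≤ (3/2)·|1 − a|/|μ|. -/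
open Complex

/-- For `μ ≠ 0`, `ψ ∈ (−π/2, π/2)`, `x > 0` and `a = x μ e^{iψ}`: if
`x ≥ max{x₁, 1/|μ|}` with `x₁ = (cos ψ + √(cos²ψ + 8|μ|² cos ψ))/(2|μ| cos ψ)`, then
`|μ/a|·(1/cos ψ) + |(1−a)/μ| ≤ (3/2)·|(1−a)/μ|`. -/
theorem leaf_corner_bound (μ : ℂ) (hμ : μ ≠ 0)
    (ψ : ℝ) (hψ : ψ ∈ Set.Ioo (-(Real.pi / 2)) (Real.pi / 2))
    (x : ℝ) (hx : 0 < x) (a : ℂ) (ha : a = (x : ℂ) * μ * Complex.exp ((ψ : ℂ) * Complex.I))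
    (x₁ : ℝ)
    (hx₁ : x₁ = (Real.cos ψ + Real.sqrt (Real.cos ψ ^ 2 + 8 * ‖μ‖ ^ 2 * Real.cos ψ))
        / (2 * ‖μ‖ * Real.cos ψ))
    (hxge : max x₁ (1 / ‖μ‖) ≤ x) :
    ‖μ / a‖ * (1 / Real.cos ψ) + ‖(1 - a) / μ‖
      ≤ (3 / 2) * ‖(1 - a) / μ‖ := by
  set m := ‖μ‖ with hm
  set c := Real.cos ψ with hcdef
  have hc : 0 < c := Real.cos_pos_of_mem_Ioo hψ
  have hmpos : 0 < m := norm_pos_iff.mpr hμ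
  have hx1 : x₁ ≤ x := le_trans (le_max_left _ _) hxge
  have hx2 : 1 / m ≤ x := le_trans (le_max_right _ _) hxge
  have h1 : 1 ≤ x * m := by
    rw [div_le_iff₀ hmpos] at hx2; linarith
  have habs_a : ‖a‖ = x * m := by
    rw [ha, norm_mul, norm_mul, Complex.norm_exp_ofReal_mul_I, Complex.norm_real,
      Real.norm_eq_abs, abs_of_pos hx, hm, mul_one]
  -- key quadratic inequality
  set s := Real.sqrt (c ^ 2 + 8 * m ^ 2 * c) with hsdef
  have hs0 : 0 ≤ s := Real.sqrt_nonneg _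
  have hs2 : s ^ 2 = c ^ 2 + 8 * m ^ 2 * c := Real.sq_sqrt (by positivity)
  have hlin : c + s ≤ 2 * m * c * x := by
    rw [hx₁, div_le_iff₀ (by positivity)] at hx1
    linarith
  have hkey : 2 * m ≤ c * x * (x * m - 1) := by
    have hsq : s ^ 2 ≤ (2 * m * c * x - c) ^ 2 := by
      have : s ≤ 2 * m * c * x - c := by linarith
      nlinarith
    rw [hs2] at hsq
    nlinarith [mul_pos hmpos hc]
  have h1a : x * m - 1 ≤ ‖1 - a‖ := by
    have h := norm_sub_norm_le a 1
    rw [norm_sub_rev a 1, habs_a] at h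
    simpa using h
  have h1anneg : 0 ≤ ‖1 - a‖ := norm_nonneg _
  rw [norm_div, norm_div, habs_a, ← hm]
  have hμa : m / (x * m) = 1 / x := by
    rw [mul_comm]; field_simp
  rw [hμa]
  have hAx : 2 * m ≤ ‖1 - a‖ * (x * c) := by
    nlinarith [mul_le_mul_of_nonneg_left h1a (mul_pos hc hx).le]
  have hfin : 1 / (x * c) ≤ ‖1 - a‖ / (2 * m) := by
    rw [div_le_div_iff₀ (by positivity) (by positivity)]
    linarith
  have e1 : 1 / x * (1 / c) = 1 / (x * c) := by ring
  have e2 : ‖1 - a‖ / (2 * m) = ‖1 - a‖ / m / 2 := by ring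
  rw [e1]
  rw [e2] at hfin
  linarith
end

section
/- For all integers m ≥ j ≥ 1, the number of surjective functions from Fin m onto Fin j is at most j! · C(m−1, j−1) · j^{m−j}, where C denotes the binomial coefficient. -/
open Finset

section Aux

variable {m j : ℕ} [NeZero m]

/-- The least preimage of `b` under a surjection `f`. -/
noncomputable def firstPre (f : Fin m → Fin j) (hf : Function.Surjective f) (b : Fin j) :
    Fin m :=
  (Finset.univ.filter (fun a => f a = b)).min' (by
    obtain ⟨a, ha⟩ := hf b
    exact ⟨a, by simp [ha]⟩)

lemma f_firstPre (f : Fin m → Fin j) (hf : Function.Surjective f) (b : Fin j) :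
    f (firstPre f hf b) = b := by
  have h := Finset.min'_mem (Finset.univ.filter (fun a => f a = b)) (by
    obtain ⟨a, ha⟩ := hf b
    exact ⟨a, by simp [ha]⟩)
  simpa [firstPre] using h

lemma firstPre_injective (f : Fin m → Fin j) (hf : Function.Surjective f) :
    Function.Injective (firstPre f hf) :=
  Function.LeftInverse.injective (f_firstPre f hf)

/-- The set of least preimages. -/
noncomputable def preSet (f : Fin m → Fin j) (hf : Function.Surjective f) : Finset (Fin m) :=
  Finset.image (firstPre f hf) Finset.univ

lemma card_preSet (f : Fin m → Fin j) (hf : Function.Surjective f) : (preSet f hf).card = j := by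
  rw [preSet, Finset.card_image_of_injective _ (firstPre_injective f hf), Finset.card_univ,
    Fintype.card_fin]

lemma firstPre_f_zero (f : Fin m → Fin j) (hf : Function.Surjective f) :
    firstPre f hf (f 0) = 0 :=
  le_antisymm (Finset.min'_le _ _ (by simp)) (Fin.zero_le _)

lemma zero_mem_preSet (f : Fin m → Fin j) (hf : Function.Surjective f) :
    (0 : Fin m) ∈ preSet f hf := by
  rw [preSet, Finset.mem_image]
  exact ⟨f 0, Finset.mem_univ _, firstPre_f_zero f hf⟩

lemma card_compl_preSet (f : Fin m → Fin j) (hf : Function.Surjective f) :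
    (preSet f hf)ᶜ.card = m - j := by
  classical
  rw [Finset.card_compl, card_preSet, Fintype.card_fin]

/-- The permutation induced by `f` on its set of least preimages. -/
noncomputable def permOf (f : Fin m → Fin j) (hf : Function.Surjective f) : Equiv.Perm (Fin j) :=
  Equiv.ofBijective (fun i => f ((preSet f hf).orderIsoOfFin (card_preSet f hf) i)) (by
    have hs : Function.Surjective
        (fun i => f ((preSet f hf).orderIsoOfFin (card_preSet f hf) i)) := by
      intro b
      have hx : firstPre f hf b ∈ preSet f hf := by
        rw [preSet, Finset.mem_image]
        exact ⟨b, Finset.mem_univ _, rfl⟩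
      refine ⟨((preSet f hf).orderIsoOfFin (card_preSet f hf)).symm ⟨firstPre f hf b, hx⟩, ?_⟩
      simp [f_firstPre f hf b]
    exact ⟨Finite.injective_iff_surjective.mpr hs, hs⟩)

/-- The restriction of `f` to the complement of the set of least preimages. -/
noncomputable def restOf (f : Fin m → Fin j) (hf : Function.Surjective f) :
    Fin (m - j) → Fin j :=
  fun i => f ((preSet f hf)ᶜ.orderIsoOfFin (card_compl_preSet f hf) i)

lemma orderIsoOfFin_congr {S S' : Finset (Fin m)} (hSS : S = S') {k : ℕ} (h : S.card = k)
    (h' : S'.card = k) (i : Fin k) :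
    ((S.orderIsoOfFin h i : Fin m)) = (S'.orderIsoOfFin h' i : Fin m) := by
  subst hSS; rfl

lemma eq_of_parts (f f' : Fin m → Fin j) (S : Finset (Fin m)) {k k' : ℕ} (h : S.card = k)
    (hc : Sᶜ.card = k')
    (H1 : ∀ i, f (S.orderIsoOfFin h i) = f' (S.orderIsoOfFin h i))
    (H2 : ∀ i, f (Sᶜ.orderIsoOfFin hc i) = f' (Sᶜ.orderIsoOfFin hc i)) : f = f' := by
  funext x
  by_cases hx : x ∈ S
  · have := H1 ((S.orderIsoOfFin h).symm ⟨x, hx⟩)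
    simpa using this
  · have := H2 ((Sᶜ.orderIsoOfFin hc).symm ⟨x, by simpa using hx⟩)
    simpa using this

end Aux

/-- For `m ≥ j ≥ 1`, the number of surjections `Fin m ↠ Fin j` is at most
`j! · C(m−1, j−1) · j^{m−j}`. -/
theorem surjection_count_upper_bound (m j : ℕ) (hj : 1 ≤ j) (hm : j ≤ m) :
    Nat.card {f : Fin m → Fin j // Function.Surjective f}
      ≤ j.factorial * (m - 1).choose (j - 1) * j ^ (m - j) := by
  haveI : NeZero m := ⟨by omega⟩
  classical
  set pow : Finset (Finset (Fin m)) := (Finset.univ.erase (0 : Fin m)).powersetCard (j - 1)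
    with hpow
  let Φ : {f : Fin m → Fin j // Function.Surjective f} →
      (↥pow × Equiv.Perm (Fin j) × (Fin (m - j) → Fin j)) :=
    fun fs => (⟨(preSet fs.1 fs.2).erase 0, by
        rw [hpow, Finset.mem_powersetCard]
        constructor
        · exact Finset.erase_subset_erase _ (Finset.subset_univ _)
        · rw [Finset.card_erase_of_mem (zero_mem_preSet fs.1 fs.2), card_preSet]⟩,
      permOf fs.1 fs.2, restOf fs.1 fs.2)
  have hΦ : Function.Injective Φ := by
    rintro ⟨f, hf⟩ ⟨f', hf'⟩ h
    simp only [Φ, Prod.mk.injEq, Subtype.mk.injEq] at h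
    obtain ⟨hS0, hperm, hrest⟩ := h
    have hS : preSet f hf = preSet f' hf' := by
      have h1 := Finset.insert_erase (zero_mem_preSet f hf)
      have h2 := Finset.insert_erase (zero_mem_preSet f' hf')
      rw [← h1, ← h2, hS0]
    refine Subtype.ext ?_
    refine eq_of_parts f f' (preSet f hf) (card_preSet f hf) (card_compl_preSet f hf) ?_ ?_
    · intro i
      have := DFunLike.congr_fun hperm i
      simp only [permOf, Equiv.ofBijective_apply] at this
      change f _ = f' _ at this
      rw [this]
      congr 1
      exact (orderIsoOfFin_congr hS _ _ i).symm
    · intro i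
      have := congrFun hrest i
      simp only [restOf] at this
      rw [this]
      congr 1
      exact (orderIsoOfFin_congr (by rw [hS]) _ _ i).symm
  calc Nat.card {f : Fin m → Fin j // Function.Surjective f}
      ≤ Nat.card (↥pow × Equiv.Perm (Fin j) × (Fin (m - j) → Fin j)) :=
        Nat.card_le_card_of_injective Φ hΦ
    _ = (m - 1).choose (j - 1) * (j.factorial * j ^ (m - j)) := by
        rw [Nat.card_prod, Nat.card_prod, Nat.card_eq_fintype_card, Nat.card_eq_fintype_card,
          Nat.card_eq_fintype_card, Fintype.card_coe, Fintype.card_perm, Fintype.card_fun,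
          Fintype.card_fin, Fintype.card_fin, hpow, Finset.card_powersetCard,
          Finset.card_erase_of_mem (Finset.mem_univ _), Finset.card_univ, Fintype.card_fin]
    _ = j.factorial * (m - 1).choose (j - 1) * j ^ (m - j) := by ring
end

section
/- Let n ≥ 3 and 2 ≤ k ≤ n − 1 be integers. The number of trees on Fin n having exactly k leaves is at most n! · (e^k / k^k) · 2^{n−3} · (n − k)^k, where e is Euler's number. -/
set_option linter.unusedSectionVars false

variable {V : Type*} [DecidableEq V] [LinearOrder V]

/-- current leaves: vertices of `s` other than `r` with no `p`-child in `s`. -/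
def leafF (r : V) (p : V → V) (s : Finset V) : Finset V :=
  s.filter (fun v => v ≠ r ∧ ∀ c ∈ s, c ≠ r → p c ≠ v)

/-- `p` is a rooted-tree parent function on `s` with root `r`. -/
def GoodP (r : V) (p : V → V) (s : Finset V) : Prop :=
  r ∈ s ∧ p r = r ∧ (∀ v ∈ s, v ≠ r → p v ∈ s) ∧ (∀ v, ∃ j, p^[j] v = r)

lemma leafF_mem_s {r : V} {p : V → V} {s : Finset V} {v : V} (h : v ∈ leafF r p s) : v ∈ s :=
  (Finset.mem_filter.mp h).1

lemma leafF_ne_r {r : V} {p : V → V} {s : Finset V} {v : V} (h : v ∈ leafF r p s) : v ≠ r :=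
  (Finset.mem_filter.mp h).2.1

lemma leafF_no_child {r : V} {p : V → V} {s : Finset V} {v : V} (h : v ∈ leafF r p s) :
    ∀ c ∈ s, c ≠ r → p c ≠ v :=
  (Finset.mem_filter.mp h).2.2

noncomputable def encodeP (r : V) (p : V → V) (s : Finset V) : List V :=
  if h : 3 ≤ s.card ∧ (leafF r p s).Nonempty then
    p ((leafF r p s).max' h.2) :: encodeP r p (s.erase ((leafF r p s).max' h.2))
  else []
termination_by s.card
decreasing_by
  exact Finset.card_erase_lt_of_mem (leafF_mem_s (Finset.max'_mem _ h.2))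

section dd

variable {r : V} {p : V → V}

/-- distance to root -/
noncomputable def ddP (r : V) (p : V → V) (hre : ∀ v, ∃ j, p^[j] v = r) (v : V) : ℕ :=
  Nat.find (hre v)

lemma ddP_pos (hre : ∀ v, ∃ j, p^[j] v = r) {v : V} (hv : v ≠ r) :
    0 < ddP r p hre v := by
  rcases Nat.eq_zero_or_pos (ddP r p hre v) with h | h
  · have hspec : p^[ddP r p hre v] v = r := Nat.find_spec (hre v)
    rw [h] at hspec
    simp at hspec
    exact absurd hspec hv
  · exact h

lemma ddP_parent_lt (hre : ∀ v, ∃ j, p^[j] v = r) {c : V} (hc : c ≠ r) :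
    ddP r p hre (p c) < ddP r p hre c := by
  have h1 : 1 ≤ ddP r p hre c := ddP_pos hre hc
  have hspec : p^[ddP r p hre c] c = r := Nat.find_spec (hre c)
  have h2 : p^[ddP r p hre c - 1] (p c) = r := by
    rw [← Function.iterate_succ_apply, Nat.succ_eq_add_one, Nat.sub_add_cancel h1]
    exact hspec
  have h3 : ddP r p hre (p c) ≤ ddP r p hre c - 1 := Nat.find_min' (hre (p c)) h2
  omega

lemma ddP_r (hre : ∀ v, ∃ j, p^[j] v = r) : ddP r p hre r = 0 :=
  Nat.eq_zero_of_le_zero (Nat.find_le (by simp))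

/-- a leaf exists whenever `s` has at least two vertices -/
lemma leafF_nonempty {s : Finset V} (hG : GoodP r p s) (h2 : 2 ≤ s.card) :
    (leafF r p s).Nonempty := by
  obtain ⟨hr, hpr, hmap, hre⟩ := hG
  obtain ⟨v, hvs, hvmax⟩ := s.exists_max_image (ddP r p hre) ⟨r, hr⟩
  obtain ⟨u, hus, hur⟩ := Finset.exists_mem_ne (show 1 < s.card by omega) r
  have hdu : 0 < ddP r p hre u := ddP_pos hre hur
  have hdv : 0 < ddP r p hre v := lt_of_lt_of_le hdu (hvmax u hus)
  have hvr : v ≠ r := by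
    intro h; rw [h, ddP_r] at hdv; omega
  refine ⟨v, Finset.mem_filter.mpr ⟨hvs, hvr, ?_⟩⟩
  intro c hcs hcr hpc
  have := ddP_parent_lt hre hcr
  rw [hpc] at this
  exact absurd (hvmax c hcs) (by omega)

lemma goodP_erase {s : Finset V} (hG : GoodP r p s) {v0 : V} (hv0 : v0 ∈ leafF r p s) :
    GoodP r p (s.erase v0) := by
  obtain ⟨hr, hpr, hmap, hre⟩ := hG
  refine ⟨Finset.mem_erase.mpr ⟨Ne.symm (leafF_ne_r hv0), hr⟩, hpr, ?_, hre⟩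
  · intro v hv hvr
    have hvs := Finset.mem_of_mem_erase hv
    refine Finset.mem_erase.mpr ⟨?_, hmap v hvs hvr⟩
    intro hpve
    exact leafF_no_child hv0 v hvs hvr hpve

lemma pv_ne {r : V} {p : V → V} (hre : ∀ v, ∃ j, p^[j] v = r) {v : V} (hv : v ≠ r) :
    p v ≠ v := by
  intro hEq
  obtain ⟨j, hj⟩ := hre v
  rw [Function.iterate_fixed hEq] at hj
  exact hv hj

lemma mem_leafF_iff {r : V} {p : V → V} {s : Finset V} {u : V} :
    u ∈ leafF r p s ↔ u ∈ s ∧ u ≠ r ∧ u ∉ (s.erase r).image p := by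
  simp only [leafF, Finset.mem_filter, Finset.mem_image, Finset.mem_erase, not_exists]
  constructor
  · rintro ⟨hus, hur, hc⟩
    exact ⟨hus, hur, by rintro x ⟨⟨hxr, hxs⟩, hpx⟩; exact hc x hxs hxr hpx⟩
  · rintro ⟨hus, hur, hc⟩
    exact ⟨hus, hur, fun c hcs hcr hpc => hc c ⟨⟨hcr, hcs⟩, hpc⟩⟩

lemma max'_congr {t₁ t₂ : Finset V} (h₁ : t₁.Nonempty) (h₂ : t₂.Nonempty) (h : t₁ = t₂) :
    t₁.max' h₁ = t₂.max' h₂ := by subst h; rfl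

lemma encodeP_length {r : V} {p : V → V} (s : Finset V) :
    GoodP r p s → 2 ≤ s.card → (encodeP r p s).length = s.card - 2 := by
  induction s using Finset.strongInductionOn with
  | _ s ih =>
    intro hG h2
    rw [encodeP]
    split_ifs with h
    · obtain ⟨h3, hne⟩ := h
      have hv0 : (leafF r p s).max' hne ∈ leafF r p s := Finset.max'_mem _ hne
      have hv0s : (leafF r p s).max' hne ∈ s := leafF_mem_s hv0
      have hcard : (s.erase ((leafF r p s).max' hne)).card = s.card - 1 :=
        Finset.card_erase_of_mem hv0s
      rw [List.length_cons,
        ih _ (Finset.erase_ssubset hv0s) (goodP_erase hG hv0) (by omega)]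
      omega
    · have hcard2 : s.card = 2 := by
        by_contra hne2
        exact h ⟨by omega, leafF_nonempty hG (by omega)⟩
      simp [hcard2]

lemma encodeP_toFinset {r : V} {p : V → V} (s : Finset V) :
    GoodP r p s → 2 ≤ s.card →
    (encodeP r p s).toFinset ∪ {r} = (s.erase r).image p ∪ {r} := by
  induction s using Finset.strongInductionOn with
  | _ s ih =>
    intro hG h2
    rw [encodeP]
    split_ifs with h
    · obtain ⟨h3, hne⟩ := h
      have hv0 : (leafF r p s).max' hne ∈ leafF r p s := Finset.max'_mem _ hne
      set v0 := (leafF r p s).max' hne with hv0def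
      have hv0s : v0 ∈ s := leafF_mem_s hv0
      have hv0r : v0 ≠ r := leafF_ne_r hv0
      have hcard : 2 ≤ (s.erase v0).card := by
        rw [Finset.card_erase_of_mem hv0s]; omega
      have IH := ih _ (Finset.erase_ssubset hv0s) (goodP_erase hG hv0) hcard
      have hins : s.erase r = insert v0 ((s.erase v0).erase r) := by
        rw [Finset.erase_right_comm, Finset.insert_erase
          (Finset.mem_erase.mpr ⟨hv0r, hv0s⟩)]
      rw [List.toFinset_cons, hins, Finset.image_insert, Finset.insert_union,
        Finset.insert_union, IH]
    · have hcard2 : s.card = 2 := by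
        by_contra hne2
        exact h ⟨by omega, leafF_nonempty hG (by omega)⟩
      obtain ⟨hr, hpr, hmap, hre⟩ := hG
      have h1 : (s.erase r).card = 1 := by
        rw [Finset.card_erase_of_mem hr]; omega
      obtain ⟨x, hx⟩ := Finset.card_eq_one.mp h1
      have hxer : x ∈ s.erase r := hx ▸ Finset.mem_singleton_self x
      have hxs : x ∈ s := Finset.mem_of_mem_erase hxer
      have hxr : x ≠ r := (Finset.mem_erase.mp hxer).1
      have hpx : p x = r := by
        have h' := hmap x hxs hxr
        have hpxx : p x ≠ x := pv_ne hre hxr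
        by_contra hpr2
        have hmem : p x ∈ s.erase r := Finset.mem_erase.mpr ⟨hpr2, h'⟩
        rw [hx, Finset.mem_singleton] at hmem
        exact hpxx hmem
      simp [hx, hpx]

lemma encodeP_inj {r : V} {p₁ p₂ : V → V} (s : Finset V) :
    GoodP r p₁ s → GoodP r p₂ s → encodeP r p₁ s = encodeP r p₂ s →
    ∀ v ∈ s, v ≠ r → p₁ v = p₂ v := by
  induction s using Finset.strongInductionOn with
  | _ s ih =>
    intro hG1 hG2 henc v hvs hvr
    by_cases h3 : 3 ≤ s.card
    · have hl1 := leafF_nonempty hG1 (by omega)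
      have hl2 := leafF_nonempty hG2 (by omega)
      have himg : (s.erase r).image p₁ ∪ {r} = (s.erase r).image p₂ ∪ {r} := by
        have hv1 := encodeP_toFinset s hG1 (by omega)
        have hv2 := encodeP_toFinset s hG2 (by omega)
        rw [henc] at hv1
        exact hv1.symm.trans hv2
      have hsets : leafF r p₁ s = leafF r p₂ s := by
        ext u
        simp only [mem_leafF_iff]
        constructor
        · rintro ⟨hus, hur, hni⟩
          refine ⟨hus, hur, fun hmem => hni ?_⟩
          have : u ∈ (s.erase r).image p₂ ∪ {r} := Finset.mem_union_left _ hmem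
          rw [← himg] at this
          rcases Finset.mem_union.mp this with h | h
          · exact h
          · exact absurd (Finset.mem_singleton.mp h) hur
        · rintro ⟨hus, hur, hni⟩
          refine ⟨hus, hur, fun hmem => hni ?_⟩
          have : u ∈ (s.erase r).image p₁ ∪ {r} := Finset.mem_union_left _ hmem
          rw [himg] at this
          rcases Finset.mem_union.mp this with h | h
          · exact h
          · exact absurd (Finset.mem_singleton.mp h) hur
      have hv0eq : (leafF r p₁ s).max' hl1 = (leafF r p₂ s).max' hl2 :=
        max'_congr hl1 hl2 hsets
      rw [encodeP, encodeP, dif_pos ⟨h3, hl1⟩, dif_pos ⟨h3, hl2⟩, ← hv0eq] at henc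
      injection henc with hhead htail
      have hv01 : (leafF r p₁ s).max' hl1 ∈ leafF r p₁ s := Finset.max'_mem _ hl1
      have hv02 : (leafF r p₁ s).max' hl1 ∈ leafF r p₂ s := by
        rw [← hsets]; exact hv01
      set v0 := (leafF r p₁ s).max' hl1
      by_cases hvv0 : v = v0
      · rw [hvv0]; exact hhead
      · exact ih _ (Finset.erase_ssubset (leafF_mem_s hv01))
          (goodP_erase hG1 hv01) (goodP_erase hG2 hv02) htail v
          (Finset.mem_erase.mpr ⟨hvv0, hvs⟩) hvr
    · obtain ⟨hr1, hpr1, hmap1, hre1⟩ := hG1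
      obtain ⟨hr2, hpr2, hmap2, hre2⟩ := hG2
      have hsub : ({v, r} : Finset V) ⊆ s := by
        intro x hx
        rcases Finset.mem_insert.mp hx with h | h
        · rw [h]; exact hvs
        · rw [Finset.mem_singleton.mp h]; exact hr1
      have hcard : ({v, r} : Finset V).card = 2 := by
        rw [Finset.card_insert_of_notMem (by simp [hvr]), Finset.card_singleton]
      have hseq : s = {v, r} := (Finset.eq_of_subset_of_card_le hsub (by omega)).symm
      have key : ∀ (p : V → V), (∀ v ∈ s, v ≠ r → p v ∈ s) →
          (∀ w, ∃ j, p^[j] w = r) → p v = r := by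
        intro p hmap hre
        have h' := hmap v hvs hvr
        rw [hseq] at h'
        rcases Finset.mem_insert.mp h' with h | h
        · exact absurd h (pv_ne hre hvr)
        · exact Finset.mem_singleton.mp h
      rw [key p₁ hmap1 hre1, key p₂ hmap2 hre2]

set_option linter.unusedSectionVars false

open SimpleGraph

variable {V : Type*} [DecidableEq V] [LinearOrder V] {G : SimpleGraph V}

/-- the canonical path between two vertices of a tree -/
noncomputable def tpath (hG : G.IsTree) (v w : V) : G.Walk v w :=
  (hG.existsUnique_path v w).exists.choose

lemma tpath_isPath (hG : G.IsTree) (v w : V) : (tpath hG v w).IsPath :=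
  (hG.existsUnique_path v w).exists.choose_spec

lemma tpath_unique (hG : G.IsTree) {v w : V} (q : G.Walk v w) (hq : q.IsPath) :
    q = tpath hG v w :=
  ((hG.existsUnique_path v w).unique hq (tpath_isPath hG v w))

/-- the parent of a vertex, toward root `r` -/
noncomputable def par (hG : G.IsTree) (r : V) (v : V) : V :=
  (tpath hG v r).getVert 1

lemma par_root (hG : G.IsTree) (r : V) : par hG r r = r := by
  have h : (SimpleGraph.Walk.nil : G.Walk r r) = tpath hG r r :=
    tpath_unique hG _ (by simp)
  rw [par, ← h]
  exact SimpleGraph.Walk.getVert_of_length_le _ (by simp)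

lemma tpath_cons (hG : G.IsTree) {r v : V} (hvr : v ≠ r) :
    G.Adj v (par hG r v) ∧
      (tpath hG (par hG r v) r).length + 1 = (tpath hG v r).length := by
  obtain ⟨x, hadj, q, hq⟩ := SimpleGraph.Walk.exists_eq_cons_of_ne hvr (tpath hG v r)
  have hx : par hG r v = x := by
    rw [par, hq, SimpleGraph.Walk.getVert_cons_succ, SimpleGraph.Walk.getVert_zero]
  have hqp : q.IsPath := by
    have := tpath_isPath hG v r
    rw [hq] at this
    exact this.of_cons
  have hq' : q = tpath hG x r := tpath_unique hG q hqp
  constructor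
  · rw [hx]; exact hadj
  · rw [hx, ← hq']
    have := congrArg SimpleGraph.Walk.length hq
    simpa using this.symm

lemma par_adj (hG : G.IsTree) {r v : V} (hvr : v ≠ r) : G.Adj v (par hG r v) :=
  (tpath_cons hG hvr).1

lemma par_reach (hG : G.IsTree) (r : V) : ∀ v, ∃ j, (par hG r)^[j] v = r := by
  intro v
  generalize hL : (tpath hG v r).length = L
  induction L using Nat.strong_induction_on generalizing v with
  | _ L ih =>
    by_cases hvr : v = r
    · exact ⟨0, hvr⟩
    · obtain ⟨-, hlen⟩ := tpath_cons hG hvr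
      obtain ⟨j, hj⟩ := ih (tpath hG (par hG r v) r).length (by omega) (par hG r v) rfl
      exact ⟨j + 1, by rw [Function.iterate_succ_apply]; exact hj⟩

lemma par_edge (hG : G.IsTree) (r : V) {u v : V} (hadj : G.Adj u v) :
    (u ≠ r ∧ par hG r u = v) ∨ (v ≠ r ∧ par hG r v = u) := by
  by_cases hvr : v = r
  · left
    refine ⟨fun h => hadj.ne (h.trans hvr.symm), ?_⟩
    have hadj' : G.Adj u r := hvr ▸ hadj
    have hpath : (SimpleGraph.Walk.cons hadj' SimpleGraph.Walk.nil : G.Walk u r).IsPath := by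
      simp [SimpleGraph.Walk.cons_isPath_iff, hadj'.ne]
    have h2 := tpath_unique hG _ hpath
    rw [par, ← h2, SimpleGraph.Walk.getVert_cons_succ, SimpleGraph.Walk.getVert_zero, hvr]
  · by_cases hmem : v ∈ (tpath hG u r).support
    · left
      have hur : u ≠ r := by
        intro h
        subst h
        have hnil : (SimpleGraph.Walk.nil : G.Walk u u) = tpath hG u u :=
          tpath_unique hG _ (by simp)
        rw [← hnil] at hmem
        simp at hmem
        exact hadj.ne hmem.symm
      refine ⟨hur, ?_⟩
      set w := tpath hG u r with hw
      have htake : w.takeUntil v hmem = SimpleGraph.Walk.cons hadj SimpleGraph.Walk.nil := by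
        have h1 : (w.takeUntil v hmem).IsPath := (tpath_isPath hG u r).takeUntil hmem
        have h2 : (SimpleGraph.Walk.cons hadj SimpleGraph.Walk.nil : G.Walk u v).IsPath := by
          simp [SimpleGraph.Walk.cons_isPath_iff, hadj.ne]
        rw [tpath_unique hG _ h1, tpath_unique hG _ h2]
      have hspec := w.take_spec hmem
      rw [htake] at hspec
      have : w = SimpleGraph.Walk.cons hadj (w.dropUntil v hmem) := by
        conv_lhs => rw [← hspec]
        simp
      rw [par, ← hw, this, SimpleGraph.Walk.getVert_cons_succ,
        SimpleGraph.Walk.getVert_zero]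
    · right
      have hvr' : v ≠ r := hvr
      refine ⟨hvr', ?_⟩
      have hpath : (SimpleGraph.Walk.cons hadj.symm (tpath hG u r)).IsPath := by
        rw [SimpleGraph.Walk.cons_isPath_iff]
        exact ⟨tpath_isPath hG u r, hmem⟩
      have := tpath_unique hG _ hpath
      rw [par, ← this, SimpleGraph.Walk.getVert_cons_succ,
        SimpleGraph.Walk.getVert_zero]

lemma adj_iff_par (hG : G.IsTree) (r : V) (u v : V) :
    G.Adj u v ↔ (u ≠ r ∧ par hG r u = v) ∨ (v ≠ r ∧ par hG r v = u) := by
  constructor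
  · exact par_edge hG r
  · rintro (⟨hur, h⟩ | ⟨hvr, h⟩)
    · exact h ▸ par_adj hG hur
    · exact (h ▸ par_adj hG hvr).symm

lemma tree_eq_of_par_eq {G₁ G₂ : SimpleGraph V} (hG1 : G₁.IsTree) (hG2 : G₂.IsTree)
    (r : V) (h : ∀ v, v ≠ r → par hG1 r v = par hG2 r v) : G₁ = G₂ := by
  ext u v
  rw [adj_iff_par hG1 r u v, adj_iff_par hG2 r u v]
  constructor
  · rintro (⟨hur, he⟩ | ⟨hvr, he⟩)
    · exact Or.inl ⟨hur, (h u hur).symm.trans he⟩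
    · exact Or.inr ⟨hvr, (h v hvr).symm.trans he⟩
  · rintro (⟨hur, he⟩ | ⟨hvr, he⟩)
    · exact Or.inl ⟨hur, (h u hur).trans he⟩
    · exact Or.inr ⟨hvr, (h v hvr).trans he⟩

lemma goodP_par [Fintype V] (hG : G.IsTree) (r : V) :
    GoodP r (par hG r) Finset.univ :=
  ⟨Finset.mem_univ r, par_root hG r, fun v _ _ => Finset.mem_univ _, par_reach hG r⟩

section leaves

variable [Finite V]

lemma not_leaf_of_two_adj {v a b : V} (ha : G.Adj v a) (hb : G.Adj v b) (hab : a ≠ b) :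
    Nat.card (G.neighborSet v) ≠ 1 := by
  have hsub : ({a, b} : Set V) ⊆ G.neighborSet v := by
    rintro x (rfl | rfl)
    · exact ha
    · exact hb
  have h2 : 2 ≤ (G.neighborSet v).ncard := by
    rw [← Set.ncard_pair hab]
    exact Set.ncard_le_ncard hsub (Set.toFinite _)
  rw [Nat.card_coe_set_eq]
  omega

lemma dd_lt {r : V} (hG : G.IsTree) {c : V} (hcr : c ≠ r) :
    ddP r (par hG r) (par_reach hG r) (par hG r c) < ddP r (par hG r) (par_reach hG r) c :=
  ddP_parent_lt (par_reach hG r) hcr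

lemma not_leaf_of_child (hG : G.IsTree) {r c : V} (hcr : c ≠ r)
    (hpcr : par hG r c ≠ r) : Nat.card (G.neighborSet (par hG r c)) ≠ 1 := by
  have hne : par hG r (par hG r c) ≠ c := by
    have h1 := dd_lt hG hcr
    have h2 := dd_lt hG hpcr
    intro h
    rw [h] at h2
    omega
  exact not_leaf_of_two_adj ((par_adj hG hcr).symm) (par_adj hG hpcr) (Ne.symm hne)

lemma child_of_not_leaf (hG : G.IsTree) {r v : V} (hvr : v ≠ r)
    (hnl : Nat.card (G.neighborSet v) ≠ 1) : ∃ c, c ≠ r ∧ par hG r c = v := by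
  have hpos : 0 < (G.neighborSet v).ncard :=
    (Set.ncard_pos (Set.toFinite _)).mpr ⟨par hG r v, par_adj hG hvr⟩
  rw [Nat.card_coe_set_eq] at hnl
  have h2 : 1 < (G.neighborSet v).ncard := by omega
  obtain ⟨a, b, ha, hb, hab⟩ := (Set.one_lt_ncard_iff (Set.toFinite _)).mp h2
  have key : ∀ u : V, G.Adj v u → u ≠ par hG r v → ∃ c, c ≠ r ∧ par hG r c = v := by
    intro u hadj hu
    rcases par_edge hG r hadj with ⟨-, h⟩ | ⟨hur, h⟩
    · exact absurd h.symm hu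
    · exact ⟨u, hur, h⟩
  by_cases hav : a = par hG r v
  · exact key b hb (fun h => hab (hav.trans h.symm))
  · exact key a ha hav

lemma no_child_of_leaf (hG : G.IsTree) {r v : V} (hvr : v ≠ r)
    (hl : Nat.card (G.neighborSet v) = 1) : ∀ c, c ≠ r → par hG r c ≠ v := by
  intro c hcr hpc
  exact (hpc ▸ not_leaf_of_child hG hcr (hpc ▸ hvr)) hl

end leaves

namespace TreeCount

variable {n : ℕ}

noncomputable def Lf (G : SimpleGraph (Fin n)) : Finset (Fin n) :=
  Finset.univ.filter (fun v => Nat.card (G.neighborSet v) = 1)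

noncomputable def Iset (G : SimpleGraph (Fin n)) : Finset (Fin n) := (Lf G)ᶜ

lemma mem_Iset_iff {G : SimpleGraph (Fin n)} {v : Fin n} :
    v ∈ Iset G ↔ Nat.card (G.neighborSet v) ≠ 1 := by
  simp [Iset, Lf]

noncomputable def rt (G : SimpleGraph (Fin n)) (hne : (Iset G).Nonempty) : Fin n :=
  (Iset G).max' hne

lemma rt_mem (G : SimpleGraph (Fin n)) (hne : (Iset G).Nonempty) : rt G hne ∈ Iset G :=
  (Iset G).max'_mem hne

noncomputable def wl (G : SimpleGraph (Fin n)) (hT : G.IsTree) (hne : (Iset G).Nonempty) :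
    List (Fin n) :=
  encodeP (rt G hne) (par hT (rt G hne)) Finset.univ

lemma wl_length (G : SimpleGraph (Fin n)) (hT : G.IsTree) (hne : (Iset G).Nonempty)
    (hn : 3 ≤ n) : (wl G hT hne).length = n - 2 := by
  rw [wl, encodeP_length _ (goodP_par hT _) (by simp; omega)]
  simp

lemma wl_toFinset (G : SimpleGraph (Fin n)) (hT : G.IsTree) (hne : (Iset G).Nonempty)
    (hn : 3 ≤ n) :
    (wl G hT hne).toFinset ∪ {rt G hne} =
      (Finset.univ.erase (rt G hne)).image (par hT (rt G hne)) ∪ {rt G hne} := by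
  rw [wl, encodeP_toFinset _ (goodP_par hT _) (by simp; omega)]

noncomputable def wf (G : SimpleGraph (Fin n)) (hT : G.IsTree) (hne : (Iset G).Nonempty)
    (hn : 3 ≤ n) : Fin (n - 2) → Fin n :=
  fun i => (wl G hT hne).get ⟨i.1, by rw [wl_length G hT hne hn]; exact i.2⟩

lemma wf_mem_I (G : SimpleGraph (Fin n)) (hT : G.IsTree) (hne : (Iset G).Nonempty)
    (hn : 3 ≤ n) (i : Fin (n - 2)) : wf G hT hne hn i ∈ Iset G := by
  have hmem : wf G hT hne hn i ∈ (wl G hT hne).toFinset :=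
    List.mem_toFinset.mpr (List.get_mem _ _)
  have h1 : wf G hT hne hn i ∈
      (Finset.univ.erase (rt G hne)).image (par hT (rt G hne)) ∪ {rt G hne} := by
    rw [← wl_toFinset G hT hne hn]
    exact Finset.mem_union_left _ hmem
  rcases Finset.mem_union.mp h1 with h | h
  · obtain ⟨c, hc, hpc⟩ := Finset.mem_image.mp h
    have hcr : c ≠ rt G hne := (Finset.mem_erase.mp hc).1
    by_cases hx : par hT (rt G hne) c = rt G hne
    · rw [← hpc, hx]; exact rt_mem G hne
    · rw [← hpc]
      exact mem_Iset_iff.mpr (not_leaf_of_child hT hcr hx)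
  · rw [Finset.mem_singleton.mp h]; exact rt_mem G hne

lemma wf_cov (G : SimpleGraph (Fin n)) (hT : G.IsTree) (hne : (Iset G).Nonempty)
    (hn : 3 ≤ n) {x : Fin n} (hx : x ∈ (Iset G).erase (rt G hne)) :
    ∃ i, wf G hT hne hn i = x := by
  obtain ⟨hxr, hxI⟩ := Finset.mem_erase.mp hx
  obtain ⟨c, hcr, hpc⟩ := child_of_not_leaf hT hxr (mem_Iset_iff.mp hxI)
  have himg : x ∈ (Finset.univ.erase (rt G hne)).image (par hT (rt G hne)) :=
    Finset.mem_image.mpr ⟨c, Finset.mem_erase.mpr ⟨hcr, Finset.mem_univ c⟩, hpc⟩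
  have h1 : x ∈ (wl G hT hne).toFinset ∪ {rt G hne} := by
    rw [wl_toFinset G hT hne hn]
    exact Finset.mem_union_left _ himg
  have h2 : x ∈ (wl G hT hne).toFinset := by
    rcases Finset.mem_union.mp h1 with h | h
    · exact h
    · exact absurd (Finset.mem_singleton.mp h) hxr
  obtain ⟨⟨j, hj⟩, hget⟩ := List.mem_iff_get.mp (List.mem_toFinset.mp h2)
  have hj' : j < n - 2 := by rw [← wl_length G hT hne hn]; exact hj
  exact ⟨⟨j, hj'⟩, hget⟩

noncomputable def Sf (G : SimpleGraph (Fin n)) (hT : G.IsTree) (hne : (Iset G).Nonempty)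
    (hn : 3 ≤ n) : Finset (Fin (n - 2)) :=
  Finset.univ.filter (fun i => wf G hT hne hn i ∈ (Iset G).erase (rt G hne) ∧
    ∀ j, j < i → wf G hT hne hn j ≠ wf G hT hne hn i)

noncomputable def midE (G : SimpleGraph (Fin n)) (hT : G.IsTree) (hne : (Iset G).Nonempty)
    (hn : 3 ≤ n) :
    {i // i ∈ Sf G hT hne hn} ≃ {x // x ∈ (Iset G).erase (rt G hne)} :=
  Equiv.ofBijective
    (fun i => ⟨wf G hT hne hn i.1, (Finset.mem_filter.mp i.2).2.1⟩)
    (by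
      constructor
      · rintro ⟨i₁, h₁⟩ ⟨i₂, h₂⟩ heq
        simp only [Subtype.mk.injEq] at heq ⊢
        obtain ⟨-, -, hfirst₁⟩ := Finset.mem_filter.mp h₁
        obtain ⟨-, -, hfirst₂⟩ := Finset.mem_filter.mp h₂
        rcases lt_trichotomy i₁ i₂ with h | h | h
        · exact absurd heq (hfirst₂ i₁ h)
        · exact h
        · exact absurd heq.symm (hfirst₁ i₂ h)
      · rintro ⟨x, hx⟩
        have hTne : (Finset.univ.filter (fun i => wf G hT hne hn i = x)).Nonempty := by
          obtain ⟨i, hi⟩ := wf_cov G hT hne hn hx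
          exact ⟨i, Finset.mem_filter.mpr ⟨Finset.mem_univ i, hi⟩⟩
        set i0 := (Finset.univ.filter (fun i => wf G hT hne hn i = x)).min' hTne with hi0
        have hi0mem := (Finset.univ.filter (fun i => wf G hT hne hn i = x)).min'_mem hTne
        have hi0x : wf G hT hne hn i0 = x := (Finset.mem_filter.mp hi0mem).2
        refine ⟨⟨i0, Finset.mem_filter.mpr ⟨Finset.mem_univ i0, hi0x ▸ hx, ?_⟩⟩,
          Subtype.ext hi0x⟩
        intro j hj hjeq
        have : i0 ≤ j := Finset.min'_le _ j
          (Finset.mem_filter.mpr ⟨Finset.mem_univ j, hjeq.trans hi0x⟩)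
        exact absurd hj (not_lt.mpr this))

lemma Sf_card_eq (G : SimpleGraph (Fin n)) (hT : G.IsTree) (hne : (Iset G).Nonempty)
    (hn : 3 ≤ n) : (Sf G hT hne hn).card = ((Iset G).erase (rt G hne)).card := by
  rw [← Fintype.card_coe, ← Fintype.card_coe]
  exact Fintype.card_congr (midE G hT hne hn)

end TreeCount
namespace TreeCount

variable {n k : ℕ}

lemma Lf_card {G : SimpleGraph (Fin n)}
    (hk : Nat.card {v : Fin n // Nat.card (G.neighborSet v) = 1} = k) :
    (Lf G).card = k := by
  rw [← hk, Nat.card_eq_fintype_card, Fintype.card_subtype]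
  rfl

lemma Iset_card {G : SimpleGraph (Fin n)}
    (hk : Nat.card {v : Fin n // Nat.card (G.neighborSet v) = 1} = k) :
    (Iset G).card = n - k := by
  rw [Iset, Finset.card_compl, Lf_card hk, Fintype.card_fin]

lemma Iset_nonempty {G : SimpleGraph (Fin n)}
    (hk : Nat.card {v : Fin n // Nat.card (G.neighborSet v) = 1} = k)
    (hn : 3 ≤ n) (hkn : k ≤ n - 1) : (Iset G).Nonempty :=
  Finset.card_pos.mp (by rw [Iset_card hk]; omega)

lemma Ier_card {G : SimpleGraph (Fin n)} (hne : (Iset G).Nonempty)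
    (hk : Nat.card {v : Fin n // Nat.card (G.neighborSet v) = 1} = k) :
    ((Iset G).erase (rt G hne)).card = n - k - 1 := by
  rw [Finset.card_erase_of_mem (rt_mem G hne), Iset_card hk]

lemma Sf_card {G : SimpleGraph (Fin n)} (hT : G.IsTree) (hne : (Iset G).Nonempty)
    (hn : 3 ≤ n)
    (hk : Nat.card {v : Fin n // Nat.card (G.neighborSet v) = 1} = k) :
    (Sf G hT hne hn).card = n - k - 1 := by
  rw [Sf_card_eq G hT hne hn, Ier_card hne hk]

lemma Sfc_card {G : SimpleGraph (Fin n)} (hT : G.IsTree) (hne : (Iset G).Nonempty)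
    (hn : 3 ≤ n) (hk2 : 2 ≤ k) (hkn : k ≤ n - 1)
    (hk : Nat.card {v : Fin n // Nat.card (G.neighborSet v) = 1} = k) :
    (Sf G hT hne hn)ᶜ.card = k - 1 := by
  rw [Finset.card_compl, Sf_card hT hne hn hk, Fintype.card_fin]
  omega

noncomputable def Ecomp (G : SimpleGraph (Fin n)) (hT : G.IsTree) (hne : (Iset G).Nonempty)
    (hn : 3 ≤ n)
    (hk : Nat.card {v : Fin n // Nat.card (G.neighborSet v) = 1} = k) :
    Fin (n - k - 1) ≃ Fin (n - k - 1) :=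
  ((Sf G hT hne hn).orderIsoOfFin (Sf_card hT hne hn hk)).toEquiv.trans
    ((midE G hT hne hn).trans
      (((Iset G).erase (rt G hne)).orderIsoOfFin (Ier_card hne hk)).toEquiv.symm)

noncomputable def gcomp (G : SimpleGraph (Fin n)) (hT : G.IsTree) (hne : (Iset G).Nonempty)
    (hn : 3 ≤ n) (hk2 : 2 ≤ k) (hkn : k ≤ n - 1)
    (hk : Nat.card {v : Fin n // Nat.card (G.neighborSet v) = 1} = k) :
    Fin (k - 1) → Fin (n - k) :=
  fun a => ((Iset G).orderIsoOfFin (Iset_card hk)).toEquiv.symm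
    ⟨wf G hT hne hn
      (((Sf G hT hne hn)ᶜ.orderIsoOfFin (Sfc_card hT hne hn hk2 hkn hk)).toEquiv a).1,
      wf_mem_I G hT hne hn _⟩

lemma recon_mem {G : SimpleGraph (Fin n)} (hT : G.IsTree) (hne : (Iset G).Nonempty)
    (hn : 3 ≤ n)
    (hk : Nat.card {v : Fin n // Nat.card (G.neighborSet v) = 1} = k)
    (i : Fin (n - 2)) (hi : i ∈ Sf G hT hne hn) :
    wf G hT hne hn i =
      ((((Iset G).erase (rt G hne)).orderIsoOfFin (Ier_card hne hk)).toEquiv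
        ((Ecomp G hT hne hn hk)
          (((Sf G hT hne hn).orderIsoOfFin (Sf_card hT hne hn hk)).toEquiv.symm ⟨i, hi⟩))).1 := by
  simp only [Ecomp, Equiv.trans_apply, Equiv.apply_symm_apply]
  rfl

lemma recon_not_mem {G : SimpleGraph (Fin n)} (hT : G.IsTree) (hne : (Iset G).Nonempty)
    (hn : 3 ≤ n) (hk2 : 2 ≤ k) (hkn : k ≤ n - 1)
    (hk : Nat.card {v : Fin n // Nat.card (G.neighborSet v) = 1} = k)
    (i : Fin (n - 2)) (hi : i ∈ (Sf G hT hne hn)ᶜ) :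
    wf G hT hne hn i =
      (((Iset G).orderIsoOfFin (Iset_card hk)).toEquiv
        ((gcomp G hT hne hn hk2 hkn hk)
          (((Sf G hT hne hn)ᶜ.orderIsoOfFin (Sfc_card hT hne hn hk2 hkn hk)).toEquiv.symm
            ⟨i, hi⟩))).1 := by
  simp only [gcomp, Equiv.apply_symm_apply]

lemma reconA_congr {N M c : ℕ} {A₁ A₂ : Finset (Fin M)} {S₁ S₂ : Finset (Fin N)}
    (hA : A₁ = A₂) (hS : S₁ = S₂) {h₁ : A₁.card = c} {h₂ : S₁.card = c}
    {h₃ : A₂.card = c} {h₄ : S₂.card = c} {E₁ E₂ : Fin c ≃ Fin c} (hE : E₁ = E₂)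
    {i : Fin N} (hi₁ : i ∈ S₁) (hi₂ : i ∈ S₂) :
    ((A₁.orderIsoOfFin h₁).toEquiv (E₁ ((S₁.orderIsoOfFin h₂).toEquiv.symm ⟨i, hi₁⟩))).1 =
      ((A₂.orderIsoOfFin h₃).toEquiv (E₂ ((S₂.orderIsoOfFin h₄).toEquiv.symm ⟨i, hi₂⟩))).1 := by
  subst hA hS hE
  rfl

lemma reconB_congr {N M c c' : ℕ} {A₁ A₂ : Finset (Fin M)} {S₁ S₂ : Finset (Fin N)}
    (hA : A₁ = A₂) (hS : S₁ = S₂) {h₁ : A₁.card = c'} {h₂ : S₁.card = c}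
    {h₃ : A₂.card = c'} {h₄ : S₂.card = c} {g₁ g₂ : Fin c → Fin c'} (hg : g₁ = g₂)
    {i : Fin N} (hi₁ : i ∈ S₁) (hi₂ : i ∈ S₂) :
    ((A₁.orderIsoOfFin h₁).toEquiv (g₁ ((S₁.orderIsoOfFin h₂).toEquiv.symm ⟨i, hi₁⟩))).1 =
      ((A₂.orderIsoOfFin h₃).toEquiv (g₂ ((S₂.orderIsoOfFin h₄).toEquiv.symm ⟨i, hi₂⟩))).1 := by
  subst hA hS hg
  rfl

end TreeCount
namespace TreeCount

abbrev TGTt (n k : ℕ) : Type :=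
  {A : Finset (Fin n) // A.card = k} ×
    ({B : Finset (Fin (n - 2)) // B.card = n - k - 1} ×
      ((Fin (n - k - 1) ≃ Fin (n - k - 1)) × (Fin (k - 1) → Fin (n - k))))

noncomputable def encF (n k : ℕ) (hn : 3 ≤ n) (hk2 : 2 ≤ k) (hkn : k ≤ n - 1)
    (GG : {G : SimpleGraph (Fin n) //
      G.IsTree ∧ Nat.card {v : Fin n // Nat.card (G.neighborSet v) = 1} = k}) :
    TGTt n k :=
  (⟨Lf GG.1, Lf_card GG.2.2⟩,
   ⟨Sf GG.1 GG.2.1 (Iset_nonempty GG.2.2 hn hkn) hn,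
     Sf_card GG.2.1 (Iset_nonempty GG.2.2 hn hkn) hn GG.2.2⟩,
   Ecomp GG.1 GG.2.1 (Iset_nonempty GG.2.2 hn hkn) hn GG.2.2,
   gcomp GG.1 GG.2.1 (Iset_nonempty GG.2.2 hn hkn) hn hk2 hkn GG.2.2)

lemma encF_inj (n k : ℕ) (hn : 3 ≤ n) (hk2 : 2 ≤ k) (hkn : k ≤ n - 1) :
    Function.Injective (encF n k hn hk2 hkn) := by
  rintro ⟨G₁, hT₁, hk₁⟩ ⟨G₂, hT₂, hk₂⟩ heq
  simp only [encF, Prod.mk.injEq, Subtype.mk.injEq] at heq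
  obtain ⟨hL, hS, hE, hg⟩ := heq
  set hne₁ := Iset_nonempty hk₁ hn hkn with hhne₁
  set hne₂ := Iset_nonempty hk₂ hn hkn with hhne₂
  have hI : Iset G₁ = Iset G₂ := by rw [Iset, Iset, hL]
  have hr : rt G₁ hne₁ = rt G₂ hne₂ := max'_congr _ _ hI
  have hw : ∀ i, wf G₁ hT₁ hne₁ hn i = wf G₂ hT₂ hne₂ hn i := by
    intro i
    by_cases hi : i ∈ Sf G₁ hT₁ hne₁ hn
    · have hi₂ : i ∈ Sf G₂ hT₂ hne₂ hn := hS ▸ hi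
      rw [recon_mem hT₁ hne₁ hn hk₁ i hi, recon_mem hT₂ hne₂ hn hk₂ i hi₂]
      exact reconA_congr (by rw [hI, hr]) hS hE hi hi₂
    · have hi' : i ∈ (Sf G₁ hT₁ hne₁ hn)ᶜ := Finset.mem_compl.mpr hi
      have hi₂' : i ∈ (Sf G₂ hT₂ hne₂ hn)ᶜ := Finset.mem_compl.mpr (fun h => hi (hS ▸ h))
      rw [recon_not_mem hT₁ hne₁ hn hk2 hkn hk₁ i hi',
        recon_not_mem hT₂ hne₂ hn hk2 hkn hk₂ i hi₂']
      exact reconB_congr hI (by rw [hS]) hg hi' hi₂'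
  have hlen₁ := wl_length G₁ hT₁ hne₁ hn
  have hlen₂ := wl_length G₂ hT₂ hne₂ hn
  have hlist : wl G₁ hT₁ hne₁ = wl G₂ hT₂ hne₂ := by
    apply List.ext_get (by rw [hlen₁, hlen₂])
    intro j h₁ h₂
    have hj : j < n - 2 := by rw [hlen₁] at h₁; exact h₁
    exact hw ⟨j, hj⟩
  have hgood₁ := goodP_par hT₁ (rt G₁ hne₁)
  have hgood₂ := goodP_par hT₂ (rt G₂ hne₂)
  have hgood₂' : GoodP (rt G₁ hne₁) (par hT₂ (rt G₁ hne₁)) Finset.univ := by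
    rw [hr]; exact hgood₂
  have hlist' : encodeP (rt G₁ hne₁) (par hT₁ (rt G₁ hne₁)) Finset.univ
      = encodeP (rt G₁ hne₁) (par hT₂ (rt G₁ hne₁)) Finset.univ := by
    conv_rhs => rw [hr]
    exact hlist
  have hpar : ∀ v, v ≠ rt G₁ hne₁ →
      par hT₁ (rt G₁ hne₁) v = par hT₂ (rt G₁ hne₁) v := fun v hv =>
    encodeP_inj Finset.univ hgood₁ hgood₂' hlist' v (Finset.mem_univ v) hv
  exact Subtype.ext (tree_eq_of_par_eq hT₁ hT₂ _ hpar)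

theorem main_card_bound (n k : ℕ) (hn : 3 ≤ n) (hk2 : 2 ≤ k) (hkn : k ≤ n - 1) :
    Nat.card {G : SimpleGraph (Fin n) //
      G.IsTree ∧ Nat.card {v : Fin n // Nat.card (G.neighborSet v) = 1} = k}
      ≤ n.choose k * ((n - 2).choose (n - k - 1) *
          ((n - k - 1).factorial * (n - k) ^ (k - 1))) := by
  have h1 := Nat.card_le_card_of_injective _ (encF_inj n k hn hk2 hkn)
  refine le_trans h1 (le_of_eq ?_)
  rw [Nat.card_eq_fintype_card, Fintype.card_prod, Fintype.card_prod, Fintype.card_prod,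
    Fintype.card_finset_len, Fintype.card_finset_len, Fintype.card_equiv (Equiv.refl _),
    Fintype.card_fun, Fintype.card_fin, Fintype.card_fin, Fintype.card_fin, Fintype.card_fin,
    Fintype.card_fin]

end TreeCount
namespace TreeCount

lemma choose_le_two_pow' (N j : ℕ) : N.choose j ≤ 2 ^ N := by
  by_cases h : j ≤ N
  · calc N.choose j ≤ ∑ i ∈ Finset.range (N + 1), N.choose i :=
        Finset.single_le_sum (fun i _ => Nat.zero_le _) (Finset.mem_range.mpr (by omega))
    _ = 2 ^ N := Nat.sum_range_choose N
  · rw [Nat.choose_eq_zero_of_lt (by omega)]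
    exact Nat.zero_le _

lemma exp_fact (k : ℕ) (hk : 2 ≤ k) :
    2 * (k : ℝ) ^ k ≤ (k.factorial : ℝ) * Real.exp 1 ^ k := by
  induction k, hk using Nat.le_induction with
  | base =>
    have he : (2 : ℝ) ≤ Real.exp 1 := by
      have h := Real.exp_one_gt_d9
      norm_num at h
      linarith
    have hf : (((2:ℕ)).factorial : ℝ) = 2 := by norm_num [Nat.factorial]
    rw [hf]
    push_cast
    nlinarith [he]
  | succ k hk ih =>
    have hk0 : (0 : ℝ) < (k : ℝ) := by exact_mod_cast Nat.pos_of_ne_zero (by omega)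
    have hek : ((k : ℝ) + 1) ^ k ≤ (k : ℝ) ^ k * Real.exp 1 := by
      have h1 : (k : ℝ) + 1 ≤ (k : ℝ) * Real.exp (1 / (k : ℝ)) := by
        have h2 := Real.add_one_le_exp (1 / (k : ℝ))
        calc (k : ℝ) + 1 = (k : ℝ) * (1 / (k : ℝ) + 1) := by field_simp <;> ring
        _ ≤ (k : ℝ) * Real.exp (1 / (k : ℝ)) := by
            exact mul_le_mul_of_nonneg_left h2 (le_of_lt hk0)
      calc ((k : ℝ) + 1) ^ k ≤ ((k : ℝ) * Real.exp (1 / (k : ℝ))) ^ k :=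
          pow_le_pow_left₀ (by positivity) h1 k
      _ = (k : ℝ) ^ k * (Real.exp (1 / (k : ℝ))) ^ k := mul_pow _ _ k
      _ = (k : ℝ) ^ k * Real.exp 1 := by
          rw [← Real.exp_nat_mul]
          congr 1
          field_simp
    have e1 : (0 : ℝ) < Real.exp 1 := Real.exp_pos 1
    push_cast [Nat.factorial_succ]
    calc 2 * ((k : ℝ) + 1) ^ (k + 1) = ((k : ℝ) + 1) * (2 * ((k : ℝ) + 1) ^ k) := by ring
    _ ≤ ((k : ℝ) + 1) * (2 * ((k : ℝ) ^ k * Real.exp 1)) := by gcongr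
    _ = Real.exp 1 * (2 * (k : ℝ) ^ k) * ((k : ℝ) + 1) := by ring
    _ ≤ Real.exp 1 * ((k.factorial : ℝ) * Real.exp 1 ^ k) * ((k : ℝ) + 1) := by
        gcongr
    _ = ((k : ℝ) + 1) * (k.factorial : ℝ) * Real.exp 1 ^ (k + 1) := by ring

end TreeCount
/-- The number of trees on `Fin n` (connected acyclic simple graphs) having exactly `k`
leaves (vertices of degree `1`, i.e. with exactly one neighbor). -/
noncomputable def numTreesWithLeaves (n k : ℕ) : ℕ :=
  Nat.card {G : SimpleGraph (Fin n) //
    G.IsTree ∧ Nat.card {v : Fin n // Nat.card (G.neighborSet v) = 1} = k}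

/-- For `n ≥ 3` and `2 ≤ k ≤ n − 1`, the number of trees on `Fin n` with exactly `k`
leaves is at most `n! · (e^k / k^k) · 2^{n−3} · (n − k)^k`. -/
theorem count_trees_with_k_leaves_upper_bound (n k : ℕ) (hn : 3 ≤ n) (hk2 : 2 ≤ k)
    (hkn : k ≤ n - 1) :
    (numTreesWithLeaves n k : ℝ)
      ≤ (n.factorial : ℝ) * (Real.exp 1 ^ k / (k : ℝ) ^ k) * 2 ^ (n - 3)
          * ((n - k : ℕ) : ℝ) ^ k := by
  set m := n - k with hm
  have hm1 : 1 ≤ m := by omega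
  have hbound := TreeCount.main_card_bound n k hn hk2 hkn
  have hcast : (numTreesWithLeaves n k : ℝ)
      ≤ (n.choose k : ℝ) * (((n - 2).choose (m - 1) : ℝ) *
          (((m - 1).factorial : ℝ) * (m : ℝ) ^ (k - 1))) := by
    unfold numTreesWithLeaves
    calc ((Nat.card {G : SimpleGraph (Fin n) //
        G.IsTree ∧ Nat.card {v : Fin n // Nat.card (G.neighborSet v) = 1} = k} : ℕ) : ℝ)
        ≤ ((n.choose k * ((n - 2).choose (m - 1) *
            ((m - 1).factorial * m ^ (k - 1))) : ℕ) : ℝ) := Nat.cast_le.mpr hbound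
    _ = _ := by push_cast; ring
  refine le_trans hcast ?_
  have hkpos : (0 : ℝ) < (k : ℝ) ^ k :=
    pow_pos (by exact_mod_cast (show 0 < k by omega)) k
  have hK : (2 : ℝ) ≤ (k.factorial : ℝ) * Real.exp 1 ^ k / (k : ℝ) ^ k := by
    rw [le_div_iff₀ hkpos]
    nlinarith [TreeCount.exp_fact k hk2]
  have hB : (((n - 2).choose (m - 1)) : ℝ) ≤ 2 ^ (n - 2) := by
    exact_mod_cast TreeCount.choose_le_two_pow' (n - 2) (m - 1)
  have hfact : (n.factorial : ℝ) = (n.choose k : ℝ) * (k.factorial : ℝ) * (m.factorial : ℝ) := by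
    rw [hm]
    exact_mod_cast (Nat.choose_mul_factorial_mul_factorial (show k ≤ n by omega)).symm
  have hmfact : (m.factorial : ℝ) = (m : ℝ) * ((m - 1).factorial : ℝ) := by
    exact_mod_cast (Nat.mul_factorial_pred (show m ≠ 0 by omega)).symm
  have hmpow : ((m : ℕ) : ℝ) ^ k = (m : ℝ) * (m : ℝ) ^ (k - 1) := by
    conv_lhs => rw [show k = (k - 1) + 1 by omega]
    rw [pow_succ]
    ring
  have hRHS : (n.factorial : ℝ) * (Real.exp 1 ^ k / (k : ℝ) ^ k) * 2 ^ (n - 3)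
        * ((m : ℕ) : ℝ) ^ k
      = ((n.choose k : ℝ) * (((m - 1).factorial : ℝ) * (m : ℝ) ^ (k - 1)))
        * (((k.factorial : ℝ) * Real.exp 1 ^ k / (k : ℝ) ^ k)
            * ((m : ℝ) ^ 2 * 2 ^ (n - 3))) := by
    rw [hfact, hmfact, hmpow]
    ring
  rw [hRHS]
  have hstep : (((n - 2).choose (m - 1)) : ℝ)
      ≤ ((k.factorial : ℝ) * Real.exp 1 ^ k / (k : ℝ) ^ k)
          * ((m : ℝ) ^ 2 * 2 ^ (n - 3)) := by
    have hm2 : (1 : ℝ) ≤ (m : ℝ) ^ 2 := by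
      have h1 : (1 : ℝ) ≤ (m : ℝ) := by exact_mod_cast hm1
      nlinarith
    have hp : (0 : ℝ) < 2 ^ (n - 3) := by positivity
    have hKm : (2 : ℝ) ≤ ((k.factorial : ℝ) * Real.exp 1 ^ k / (k : ℝ) ^ k)
        * (m : ℝ) ^ 2 := by nlinarith [hK, hm2]
    calc (((n - 2).choose (m - 1)) : ℝ) ≤ 2 ^ (n - 2) := hB
    _ = 2 * 2 ^ (n - 3) := by rw [show n - 2 = (n - 3) + 1 by omega, pow_succ']
    _ ≤ (((k.factorial : ℝ) * Real.exp 1 ^ k / (k : ℝ) ^ k) * (m : ℝ) ^ 2) * 2 ^ (n - 3) :=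
        mul_le_mul_of_nonneg_right hKm (le_of_lt hp)
    _ = ((k.factorial : ℝ) * Real.exp 1 ^ k / (k : ℝ) ^ k)
          * ((m : ℝ) ^ 2 * 2 ^ (n - 3)) := by ring
  calc (n.choose k : ℝ) * (((n - 2).choose (m - 1) : ℝ) *
        (((m - 1).factorial : ℝ) * (m : ℝ) ^ (k - 1)))
      = ((n.choose k : ℝ) * (((m - 1).factorial : ℝ) * (m : ℝ) ^ (k - 1)))
          * (((n - 2).choose (m - 1)) : ℝ) := by ring
  _ ≤ ((n.choose k : ℝ) * (((m - 1).factorial : ℝ) * (m : ℝ) ^ (k - 1)))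
        * (((k.factorial : ℝ) * Real.exp 1 ^ k / (k : ℝ) ^ k)
            * ((m : ℝ) ^ 2 * 2 ^ (n - 3))) :=
      mul_le_mul_of_nonneg_left hstep (by positivity)
end dd
end
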